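/- arXiv:0906.0139 — 2 statements merged into one kernel-verified Lean document; each statement's English description precedes it below -/
import Mathlib

section
/- Let q be a nontrivial idempotent in M_n(ℂ) with dim({[q]}′ ∩ D_n) > 1. Then there exists an idempotent r in M_n(ℂ) with E(r) = E(q), with {[r]}′ ∩ D_n strictly contained in {[q]}′ ∩ D_n, and connected to q by a piecewise affine path of at most two segments lying in the set of idempotents with diagonal E(q). -/
noncomputable def rangeProj {n : ℕ} (q : Matrix (Fin n) (Fin n) ℂ) :
    Matrix (Fin n) (Fin n) ℂ :=
  q * (q + q.conjTranspose - 1)⁻¹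

namespace RedStepAux

open Matrix Complex Polynomial

variable {n : ℕ}

/-- rank-one matrix helpers -/
lemma mul_vmv (A : Matrix (Fin n) (Fin n) ℂ) (x y : Fin n → ℂ) :
    A * vecMulVec x y = vecMulVec (A *ᵥ x) y := by
  ext i j
  simp [Matrix.mul_apply, Matrix.vecMulVec_apply, Matrix.mulVec, dotProduct,
    Finset.sum_mul, mul_assoc]

lemma vmv_mul (A : Matrix (Fin n) (Fin n) ℂ) (x y : Fin n → ℂ) :
    vecMulVec x y * A = vecMulVec x (y ᵥ* A) := by
  ext i j
  simp only [Matrix.mul_apply, Matrix.vecMulVec_apply, Matrix.vecMul, dotProduct,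
    Finset.mul_sum]
  exact Finset.sum_congr rfl fun k _ => by ring

lemma vmv_mul_vmv (x y z t : Fin n → ℂ) :
    vecMulVec x y * vecMulVec z t = (y ⬝ᵥ z) • vecMulVec x t := by
  ext i j
  simp only [Matrix.mul_apply, Matrix.vecMulVec_apply, Matrix.smul_apply,
    dotProduct, Finset.sum_mul, smul_eq_mul]
  exact Finset.sum_congr rfl fun k _ => by ring

lemma vmv_mulVec (x y z : Fin n → ℂ) :
    vecMulVec x y *ᵥ z = (y ⬝ᵥ z) • x := by
  ext i
  simp only [Matrix.mulVec, Matrix.vecMulVec_apply, dotProduct, Pi.smul_apply,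
    smul_eq_mul, Finset.sum_mul]
  exact Finset.sum_congr rfl fun k _ => by ring

lemma vecMul_vmv (x y z : Fin n → ℂ) :
    z ᵥ* vecMulVec x y = (z ⬝ᵥ x) • y := by
  ext j
  simp only [Matrix.vecMul, Matrix.vecMulVec_apply, dotProduct, Pi.smul_apply,
    smul_eq_mul, Finset.sum_mul]
  exact Finset.sum_congr rfl fun k _ => by ring

lemma vmv_conjTranspose (x y : Fin n → ℂ) :
    (vecMulVec x y)ᴴ = vecMulVec (star y) (star x) := by
  ext i j
  simp [Matrix.conjTranspose_apply, Matrix.vecMulVec_apply, mul_comm]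

lemma vmv_add_left (x x' y : Fin n → ℂ) :
    vecMulVec (x + x') y = vecMulVec x y + vecMulVec x' y := by
  ext i j; simp [Matrix.vecMulVec_apply, add_mul]

lemma vmv_smul_left (c : ℂ) (x y : Fin n → ℂ) :
    vecMulVec (c • x) y = c • vecMulVec x y := by
  ext i j; simp [Matrix.vecMulVec_apply, mul_assoc]

/-- `star v ⬝ᵥ v` as a real number -/
lemma star_dot_self (v : Fin n → ℂ) :
    star v ⬝ᵥ v = ((∑ i, Complex.normSq (v i) : ℝ) : ℂ) := by
  simp only [dotProduct, Pi.star_apply, Complex.ofReal_sum]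
  exact Finset.sum_congr rfl fun i _ => by
    rw [Complex.star_def, ← Complex.normSq_eq_conj_mul_self]

lemma star_dot_self_nonneg (v : Fin n → ℂ) : 0 ≤ ∑ i, Complex.normSq (v i) :=
  Finset.sum_nonneg fun i _ => Complex.normSq_nonneg _

lemma star_dot_self_pos {v : Fin n → ℂ} (hv : v ≠ 0) : 0 < ∑ i, Complex.normSq (v i) := by
  obtain ⟨i, hi⟩ := Function.ne_iff.mp hv
  have h : 0 < Complex.normSq (v i) := by
    simpa [Complex.normSq_pos] using hi
  exact lt_of_lt_of_le h (Finset.single_le_sum (fun j _ => Complex.normSq_nonneg _)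
    (Finset.mem_univ i))

lemma eq_zero_of_normSq_sum_eq_zero {v : Fin n → ℂ} (h : ∑ i, Complex.normSq (v i) = 0) :
    v = 0 := by
  by_contra hv
  exact absurd h (ne_of_gt (star_dot_self_pos hv))

/-- basic spec of the range projection of an idempotent -/
lemma rangeProj_spec (x : Matrix (Fin n) (Fin n) ℂ) (hx : x * x = x) :
    (rangeProj x)ᴴ = rangeProj x ∧ rangeProj x * x = x ∧ x * rangeProj x = rangeProj x ∧
      rangeProj x * rangeProj x = rangeProj x := by
  classical
  set a : Matrix (Fin n) (Fin n) ℂ := x + xᴴ - 1 with ha_def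
  have hxh : xᴴ * xᴴ = xᴴ := by rw [← Matrix.conjTranspose_mul, hx]
  have haH : aᴴ = a := by
    simp [ha_def, Matrix.conjTranspose_sub, Matrix.conjTranspose_add]
    abel
  have haa : a * a = 1 + (x - xᴴ) * (x - xᴴ)ᴴ := by
    have h1 : (x - xᴴ)ᴴ = xᴴ - x := by simp [Matrix.conjTranspose_sub]
    rw [h1, ha_def]
    simp only [Matrix.sub_mul, Matrix.mul_sub, Matrix.add_mul, Matrix.mul_add,
      Matrix.one_mul, Matrix.mul_one, hx, hxh]
    abel
  have hadet : IsUnit a.det := by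
    rw [isUnit_iff_ne_zero]
    intro hdet
    obtain ⟨v, hv0, hv⟩ := (Matrix.exists_mulVec_eq_zero_iff).mpr hdet
    have h2 : (a * a) *ᵥ v = 0 := by
      rw [← Matrix.mulVec_mulVec, hv, Matrix.mulVec_zero]
    rw [haa] at h2
    have h3 : v + (x - xᴴ) *ᵥ ((x - xᴴ)ᴴ *ᵥ v) = 0 := by
      simpa [Matrix.add_mulVec, Matrix.one_mulVec, Matrix.mulVec_mulVec] using h2
    set c := x - xᴴ with hc
    set y := cᴴ *ᵥ v with hy
    have h4 : star v ⬝ᵥ v + star y ⬝ᵥ y = 0 := by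
      have h5 : star v ⬝ᵥ (v + c *ᵥ y) = 0 := by rw [h3]; simp
      rw [dotProduct_add] at h5
      have h6 : star v ⬝ᵥ (c *ᵥ y) = star y ⬝ᵥ y := by
        rw [Matrix.dotProduct_mulVec]
        congr 1
        rw [hy, Matrix.star_mulVec, Matrix.conjTranspose_conjTranspose]
      rw [h6] at h5; exact h5
    rw [star_dot_self, star_dot_self, ← Complex.ofReal_add, Complex.ofReal_eq_zero] at h4
    have hv' : ∑ i, Complex.normSq (v i) = 0 := by
      have h7 := star_dot_self_nonneg v
      have h8 := star_dot_self_nonneg y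
      linarith
    exact hv0 (eq_zero_of_normSq_sum_eq_zero hv')
  have haA : a * a⁻¹ = 1 := Matrix.mul_nonsing_inv a hadet
  have hAa : a⁻¹ * a = 1 := Matrix.nonsing_inv_mul a hadet
  set A := a⁻¹ with hA
  set A2 := A * A with hA2
  have haaA2 : (a * a) * A2 = 1 := by
    calc a * a * (A * A) = a * (a * A) * A := by simp only [Matrix.mul_assoc]
    _ = 1 := by rw [haA, Matrix.mul_one, haA]
  have hA2aa : A2 * (a * a) = 1 := by
    calc A * A * (a * a) = A * (A * a) * a := by simp only [Matrix.mul_assoc]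
    _ = 1 := by rw [hAa, Matrix.mul_one, hAa]
  have haaH : (a * a)ᴴ = a * a := by rw [Matrix.conjTranspose_mul, haH]
  have hA2inv : A2 = (a * a)⁻¹ := (Matrix.inv_eq_right_inv haaA2).symm
  have hA2H : A2ᴴ = A2 := by
    rw [hA2inv, Matrix.conjTranspose_nonsing_inv, haaH]
  -- commutation with A2
  have key : ∀ y : Matrix (Fin n) (Fin n) ℂ, y * (a * a) = (a * a) * y → y * A2 = A2 * y := by
    intro y hy
    calc y * A2 = 1 * (y * A2) := by rw [Matrix.one_mul]
    _ = A2 * ((a * a) * y) * A2 := by rw [← hA2aa]; simp only [Matrix.mul_assoc]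
    _ = A2 * (y * (a * a)) * A2 := by rw [hy]
    _ = A2 * y * ((a * a) * A2) := by simp only [Matrix.mul_assoc]
    _ = A2 * y := by rw [haaA2, Matrix.mul_one]
  have hxa : x * a = x * xᴴ := by
    rw [ha_def]; simp only [Matrix.mul_sub, Matrix.mul_add, Matrix.mul_one, hx]; abel
  have hax : a * x = xᴴ * x := by
    rw [ha_def]; simp only [Matrix.sub_mul, Matrix.add_mul, Matrix.one_mul, hx]; abel
  have haxh : a * xᴴ = x * xᴴ := by
    rw [ha_def]; simp only [Matrix.sub_mul, Matrix.add_mul, Matrix.one_mul, hxh]; abel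
  have haax : (a * a) * x = (x * xᴴ) * x := by
    calc (a * a) * x = a * (a * x) := by rw [Matrix.mul_assoc]
    _ = a * (xᴴ * x) := by rw [hax]
    _ = (a * xᴴ) * x := by rw [Matrix.mul_assoc]
    _ = (x * xᴴ) * x := by rw [haxh]
  have hxha : xᴴ * a = xᴴ * x := by
    have h := congrArg Matrix.conjTranspose hax
    simp only [Matrix.conjTranspose_mul, Matrix.conjTranspose_conjTranspose, haH] at h
    exact h
  have hxaa : x * (a * a) = (a * a) * x := by
    calc x * (a * a) = (x * a) * a := by rw [Matrix.mul_assoc]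
    _ = x * (xᴴ * a) := by rw [hxa, Matrix.mul_assoc]
    _ = x * (xᴴ * x) := by rw [hxha]
    _ = (x * xᴴ) * x := by rw [Matrix.mul_assoc]
    _ = (a * a) * x := haax.symm
  have hxhaa : xᴴ * (a * a) = (a * a) * xᴴ := by
    have h := congrArg Matrix.conjTranspose hxaa
    simp only [Matrix.conjTranspose_mul, haaH] at h
    exact h.symm
  have hxxhaa : (x * xᴴ) * (a * a) = (a * a) * (x * xᴴ) := by
    calc (x * xᴴ) * (a * a) = x * (xᴴ * (a * a)) := by rw [Matrix.mul_assoc]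
    _ = x * ((a * a) * xᴴ) := by rw [hxhaa]
    _ = ((x * (a * a)) * xᴴ) := by simp only [Matrix.mul_assoc]
    _ = ((a * a) * x) * xᴴ := by rw [hxaa]
    _ = (a * a) * (x * xᴴ) := by rw [Matrix.mul_assoc]
  have hxA2 : x * A2 = A2 * x := key x hxaa
  have hxxhA2 : (x * xᴴ) * A2 = A2 * (x * xᴴ) := key _ hxxhaa
  have hPdef : rangeProj x = x * A := rfl
  have hAeq : A = a * A2 := by
    have h1 : a * (a * A2) = 1 := by rw [← Matrix.mul_assoc]; exact haaA2
    calc A = A * (a * (a * A2)) := by rw [h1, Matrix.mul_one]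
    _ = (A * a) * (a * A2) := by rw [Matrix.mul_assoc]
    _ = a * A2 := by rw [hAa, Matrix.one_mul]
  have hPd : rangeProj x = (x * xᴴ) * A2 := by
    rw [hPdef, hAeq, ← Matrix.mul_assoc, hxa]
  constructor
  · -- hermitian
    rw [hPd]
    calc ((x * xᴴ) * A2)ᴴ = A2ᴴ * (x * xᴴ)ᴴ := by rw [Matrix.conjTranspose_mul]
    _ = A2 * (x * xᴴ) := by
        rw [hA2H, Matrix.conjTranspose_mul, Matrix.conjTranspose_conjTranspose]
    _ = (x * xᴴ) * A2 := hxxhA2.symm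
  refine ⟨?_, ?_, ?_⟩
  · -- P * x = x
    rw [hPd]
    calc ((x * xᴴ) * A2) * x = (x * xᴴ) * (A2 * x) := by rw [Matrix.mul_assoc]
    _ = (x * xᴴ) * (x * A2) := by rw [hxA2]
    _ = ((x * xᴴ) * x) * A2 := by simp only [Matrix.mul_assoc]
    _ = ((a * a) * x) * A2 := by rw [haax]
    _ = ((a * a) * A2) * x := by
        rw [Matrix.mul_assoc, hxA2, ← Matrix.mul_assoc]
    _ = x := by rw [haaA2, Matrix.one_mul]
  · -- x * P = P
    rw [hPdef, ← Matrix.mul_assoc, hx]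
  · -- P * P = P
    rw [hPd]
    calc ((x * xᴴ) * A2) * ((x * xᴴ) * A2)
        = (x * xᴴ) * (A2 * (x * xᴴ)) * A2 := by simp only [Matrix.mul_assoc]
    _ = (x * xᴴ) * ((x * xᴴ) * A2) * A2 := by rw [← hxxhA2]
    _ = ((x * xᴴ) * (x * xᴴ)) * (A2 * A2) := by simp only [Matrix.mul_assoc]
    _ = (((x * xᴴ) * x) * xᴴ) * (A2 * A2) := by simp only [Matrix.mul_assoc]
    _ = (((a * a) * x) * xᴴ) * (A2 * A2) := by rw [haax]
    _ = (a * a) * ((x * xᴴ) * (A2 * A2)) := by simp only [Matrix.mul_assoc]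
    _ = (x * xᴴ) * ((a * a) * (A2 * A2)) := by
        rw [← Matrix.mul_assoc, ← hxxhaa, Matrix.mul_assoc]
    _ = (x * xᴴ) * A2 := by rw [← Matrix.mul_assoc (a*a) A2 A2, haaA2, Matrix.one_mul]

/-- uniqueness of hermitian idempotent "range witnesses" -/
lemma proj_unique (x M₁ M₂ : Matrix (Fin n) (Fin n) ℂ)
    (h1H : M₁ᴴ = M₁) (h2H : M₂ᴴ = M₂)
    (h1x : M₁ * x = x) (hx1 : x * M₁ = M₁)
    (h2x : M₂ * x = x) (hx2 : x * M₂ = M₂) : M₁ = M₂ := by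
  have h12 : M₁ * M₂ = M₂ := by
    calc M₁ * M₂ = M₁ * (x * M₂) := by rw [hx2]
    _ = (M₁ * x) * M₂ := by rw [Matrix.mul_assoc]
    _ = x * M₂ := by rw [h1x]
    _ = M₂ := hx2
  have h21 : M₂ * M₁ = M₁ := by
    calc M₂ * M₁ = M₂ * (x * M₁) := by rw [hx1]
    _ = (M₂ * x) * M₁ := by rw [Matrix.mul_assoc]
    _ = x * M₁ := by rw [h2x]
    _ = M₁ := hx1
  calc M₁ = M₂ * M₁ := h21.symm
  _ = M₂ᴴ * M₁ᴴ := by rw [h1H, h2H]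
  _ = (M₁ * M₂)ᴴ := (Matrix.conjTranspose_mul _ _).symm
  _ = M₂ᴴ := by rw [h12]
  _ = M₂ := h2H


lemma vmv_zero_left (y : Fin n → ℂ) : vecMulVec (0 : Fin n → ℂ) y = 0 := by
  ext i j; simp [Matrix.vecMulVec_apply]

lemma vmv_zero_right (x : Fin n → ℂ) : vecMulVec x (0 : Fin n → ℂ) = 0 := by
  ext i j; simp [Matrix.vecMulVec_apply]

lemma vmv_smul_right (c : ℂ) (x y : Fin n → ℂ) :
    vecMulVec x (c • y) = c • vecMulVec x y := by
  ext i j; simp [Matrix.vecMulVec_apply]; ring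

lemma mulVec_single_eq (A : Matrix (Fin n) (Fin n) ℂ) (j : Fin n) (i : Fin n) :
    (A *ᵥ Pi.single j 1) i = A i j := by
  simp [Matrix.mulVec, dotProduct, Pi.single_apply]

lemma eq_zero_of_forall_mulVec {A : Matrix (Fin n) (Fin n) ℂ}
    (h : ∀ v, A *ᵥ v = 0) : A = 0 := by
  ext i j
  have := congrFun (h (Pi.single j 1)) i
  rw [mulVec_single_eq] at this
  simpa using this

lemma diag_mul_apply {c : Matrix (Fin n) (Fin n) ℂ} (hc : c.IsDiag)
    (A : Matrix (Fin n) (Fin n) ℂ) (i j : Fin n) : (c * A) i j = c i i * A i j := by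
  rw [Matrix.mul_apply]
  rw [Finset.sum_eq_single i]
  · intro k _ hk
    rw [hc (Ne.symm hk), zero_mul]
  · intro h; exact absurd (Finset.mem_univ i) h

lemma mul_diag_apply {c : Matrix (Fin n) (Fin n) ℂ} (hc : c.IsDiag)
    (A : Matrix (Fin n) (Fin n) ℂ) (i j : Fin n) : (A * c) i j = A i j * c j j := by
  rw [Matrix.mul_apply]
  rw [Finset.sum_eq_single j]
  · intro k _ hk
    rw [hc hk, mul_zero]
  · intro h; exact absurd (Finset.mem_univ j) h

lemma vecMul_smul_mat (c : ℂ) (A : Matrix (Fin n) (Fin n) ℂ) (v : Fin n → ℂ) :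
    v ᵥ* (c • A) = c • (v ᵥ* A) := by
  ext j
  simp only [Matrix.vecMul, dotProduct, Matrix.smul_apply, Pi.smul_apply, smul_eq_mul,
    Finset.mul_sum]
  exact Finset.sum_congr rfl fun k _ => by ring

set_option maxHeartbeats 1000000 in
/-- The main construction lemma. -/
lemma key (q : Matrix (Fin n) (Fin n) ℂ) (hq : q * q = q)
    (f : Fin n → ℂ) (hf : ∀ i, f i = 0 ∨ f i = 1)
    (hcomm : Matrix.diagonal f * rangeProj q = rangeProj q * Matrix.diagonal f)
    (h1 : Matrix.diagonal f * rangeProj q ≠ 0)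
    (h2 : (1 - Matrix.diagonal f) * (1 - rangeProj q) ≠ 0) :
    ∃ r m : Matrix (Fin n) (Fin n) ℂ,
      r * r = r ∧ (∀ i, r i i = q i i) ∧
      (∀ c : Matrix (Fin n) (Fin n) ℂ, c.IsDiag →
        c * rangeProj r = rangeProj r * c → c * rangeProj q = rangeProj q * c) ∧
      (∃ c : Matrix (Fin n) (Fin n) ℂ, c.IsDiag ∧
        c * rangeProj q = rangeProj q * c ∧ c * rangeProj r ≠ rangeProj r * c) ∧
      (∀ t : ℝ, 0 ≤ t → t ≤ 1 →
        (((1 - t : ℂ) • q + (t : ℂ) • m) * ((1 - t : ℂ) • q + (t : ℂ) • m) =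
            (1 - t : ℂ) • q + (t : ℂ) • m ∧
          (∀ i, ((1 - t : ℂ) • q + (t : ℂ) • m) i i = q i i)) ∧
        (((1 - t : ℂ) • m + (t : ℂ) • r) * ((1 - t : ℂ) • m + (t : ℂ) • r) =
            (1 - t : ℂ) • m + (t : ℂ) • r ∧
          (∀ i, ((1 - t : ℂ) • m + (t : ℂ) • r) i i = q i i))) := by
  classical
  obtain ⟨P, hPdef⟩ : ∃ P', P' = rangeProj q := ⟨_, rfl⟩
  obtain ⟨hPH, hPq, hqP, hPP⟩ := rangeProj_spec q hq
  rw [← hPdef] at hcomm h1 h2 hPH hPq hqP hPP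
  set d : Matrix (Fin n) (Fin n) ℂ := Matrix.diagonal f with hddef
  have hdd : d * d = d := by
    rw [hddef, Matrix.diagonal_mul_diagonal]
    exact congrArg Matrix.diagonal (funext fun i => by rcases hf i with h | h <;> simp [h])
  have hdH : dᴴ = d := by
    rw [hddef, Matrix.diagonal_conjTranspose]
    exact congrArg Matrix.diagonal (funext fun i => by rcases hf i with h | h <;> simp [h])
  have hdd' : d * (1 - d) = 0 := by rw [Matrix.mul_sub, Matrix.mul_one, hdd, sub_self]
  have hd'd : (1 - d) * d = 0 := by rw [Matrix.sub_mul, Matrix.one_mul, hdd, sub_self]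
  have hd'H : (1 - d)ᴴ = 1 - d := by
    rw [Matrix.conjTranspose_sub, hdH, Matrix.conjTranspose_one]
  have hPd' : P * (1 - d) = (1 - d) * P := by
    rw [Matrix.mul_sub, Matrix.sub_mul, Matrix.mul_one, Matrix.one_mul, hcomm]
  obtain ⟨m, hmdef⟩ : ∃ m' : Matrix (Fin n) (Fin n) ℂ, m' = d * q * d + (1 - d) * q * (1 - d) :=
    ⟨_, rfl⟩
  have hPm : P * m = m := by
    rw [hmdef, Matrix.mul_add]
    congr 1
    · calc P * (d * q * d) = (P * d) * (q * d) := by simp only [Matrix.mul_assoc]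
      _ = (d * P) * (q * d) := by rw [← hcomm]
      _ = d * ((P * q) * d) := by simp only [Matrix.mul_assoc]
      _ = d * q * d := by rw [hPq]; simp only [Matrix.mul_assoc]
    · calc P * ((1 - d) * q * (1 - d))
          = (P * (1 - d)) * (q * (1 - d)) := by simp only [Matrix.mul_assoc]
      _ = ((1 - d) * P) * (q * (1 - d)) := by rw [hPd']
      _ = (1 - d) * ((P * q) * (1 - d)) := by simp only [Matrix.mul_assoc]
      _ = (1 - d) * q * (1 - d) := by rw [hPq]; simp only [Matrix.mul_assoc]
  have hmP : m * P = P := by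
    have e3 : (d * q * d) * P = P * d := by
      calc (d * q * d) * P = d * (q * (d * P)) := by simp only [Matrix.mul_assoc]
      _ = d * (q * (P * d)) := by rw [hcomm]
      _ = d * ((q * P) * d) := by simp only [Matrix.mul_assoc]
      _ = d * (P * d) := by rw [hqP]
      _ = (d * P) * d := by simp only [Matrix.mul_assoc]
      _ = (P * d) * d := by rw [← hcomm]
      _ = P * d := by rw [Matrix.mul_assoc, hdd]
    have e4 : ((1 - d) * q * (1 - d)) * P = P * (1 - d) := by
      have hd'd' : (1 - d) * (1 - d) = 1 - d := by
        rw [Matrix.mul_sub, Matrix.mul_one, hd'd, sub_zero]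
      calc ((1 - d) * q * (1 - d)) * P
          = (1 - d) * (q * ((1 - d) * P)) := by simp only [Matrix.mul_assoc]
      _ = (1 - d) * (q * (P * (1 - d))) := by rw [← hPd']
      _ = (1 - d) * ((q * P) * (1 - d)) := by simp only [Matrix.mul_assoc]
      _ = (1 - d) * (P * (1 - d)) := by rw [hqP]
      _ = ((1 - d) * P) * (1 - d) := by simp only [Matrix.mul_assoc]
      _ = (P * (1 - d)) * (1 - d) := by rw [hPd']
      _ = P * (1 - d) := by rw [Matrix.mul_assoc, hd'd']
    rw [hmdef, Matrix.add_mul, e3, e4, ← Matrix.mul_add]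
    simp
  have hmm2 : m * m = m := by
    calc m * m = m * (P * m) := by rw [hPm]
    _ = (m * P) * m := by rw [Matrix.mul_assoc]
    _ = P * m := by rw [hmP]
    _ = m := hPm
  have hqm : q * m = m := by
    calc q * m = q * (P * m) := by rw [hPm]
    _ = (q * P) * m := by rw [Matrix.mul_assoc]
    _ = P * m := by rw [hqP]
    _ = m := hPm
  have hmq : m * q = q := by
    calc m * q = m * (P * q) := by rw [hPq]
    _ = (m * P) * q := by rw [Matrix.mul_assoc]
    _ = P * q := by rw [hmP]
    _ = q := hPq
  have hdm : d * m = d * q * d := by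
    rw [hmdef, Matrix.mul_add]
    have e5 : d * ((1 - d) * q * (1 - d)) = 0 := by
      calc d * ((1 - d) * q * (1 - d))
          = (d * (1 - d)) * (q * (1 - d)) := by simp only [Matrix.mul_assoc]
      _ = 0 := by rw [hdd', Matrix.zero_mul]
    have e6 : d * (d * q * d) = d * q * d := by
      calc d * (d * q * d) = (d * d) * (q * d) := by simp only [Matrix.mul_assoc]
      _ = d * q * d := by rw [hdd]; simp only [Matrix.mul_assoc]
    rw [e5, e6, add_zero]
  have hmd : m * d = d * q * d := by
    rw [hmdef, Matrix.add_mul]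
    have e5 : ((1 - d) * q * (1 - d)) * d = 0 := by
      calc ((1 - d) * q * (1 - d)) * d
          = (1 - d) * q * ((1 - d) * d) := by simp only [Matrix.mul_assoc]
      _ = 0 := by rw [hd'd, Matrix.mul_zero]
    have e6 : (d * q * d) * d = d * q * d := by
      rw [Matrix.mul_assoc (d * q) d d, hdd]
    rw [e5, e6, add_zero]
  have hmdiag : ∀ i, m i i = q i i := by
    intro i
    have hd'diag : (1 : Matrix (Fin n) (Fin n) ℂ) - d = Matrix.diagonal (fun i => 1 - f i) := by
      rw [hddef, ← Matrix.diagonal_one, ← Matrix.diagonal_sub]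
    have e1 : (d * q * d) i i = f i * q i i * f i := by
      rw [hddef, Matrix.mul_diagonal, Matrix.diagonal_mul]
    have e2 : ((1 - d) * q * (1 - d)) i i = (1 - f i) * q i i * (1 - f i) := by
      rw [hd'diag, Matrix.mul_diagonal, Matrix.diagonal_mul]
    rw [hmdef, Matrix.add_apply, e1, e2]
    rcases hf i with h | h <;> rw [h] <;> ring
  -- existence of ζ
  have hζex : ∃ ζ : Fin n → ℂ, ζ ≠ 0 ∧ d *ᵥ ζ = 0 ∧ m *ᵥ ζ = 0 := by
    have hx₀ : ∃ x₀ : Fin n → ℂ, d *ᵥ x₀ = 0 ∧ (1 - P) *ᵥ x₀ ≠ 0 := by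
      by_contra hcon
      push_neg at hcon
      apply h2
      have hz : (1 - P) * (1 - d) = 0 := by
        apply eq_zero_of_forall_mulVec
        intro v
        have hdv : d *ᵥ ((1 - d) *ᵥ v) = 0 := by
          rw [Matrix.mulVec_mulVec, hdd', Matrix.zero_mulVec]
        have := hcon ((1 - d) *ᵥ v) hdv
        rw [← Matrix.mulVec_mulVec]
        exact this
      have hzH := congrArg Matrix.conjTranspose hz
      rw [Matrix.conjTranspose_mul, hd'H, Matrix.conjTranspose_sub, hPH,
        Matrix.conjTranspose_one, Matrix.conjTranspose_zero] at hzH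
      exact hzH
    obtain ⟨x₀, hx₀d, hx₀P⟩ := hx₀
    set Z := LinearMap.ker (Matrix.mulVecLin d) with hZdef
    set Vt := Z ⊓ LinearMap.ker (Matrix.mulVecLin (1 - P)) with hVtdef
    have hVtZ : Vt ≤ Z := inf_le_left
    have hmem : ∀ x ∈ Z, m *ᵥ x ∈ Vt := by
      intro x hx
      have hdx : d *ᵥ x = 0 := by simpa [hZdef, Matrix.mulVecLin_apply] using hx
      rw [hVtdef, Submodule.mem_inf]
      constructor
      · rw [hZdef, LinearMap.mem_ker, Matrix.mulVecLin_apply, Matrix.mulVec_mulVec, hdm,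
          ← Matrix.mulVec_mulVec, hdx, Matrix.mulVec_zero]
      · rw [LinearMap.mem_ker, Matrix.mulVecLin_apply, Matrix.mulVec_mulVec]
        have : (1 - P) * m = 0 := by rw [Matrix.sub_mul, Matrix.one_mul, hPm, sub_self]
        rw [this, Matrix.zero_mulVec]
    by_contra hno
    push_neg at hno
    have hinj : Function.Injective
        (LinearMap.codRestrict Vt ((Matrix.mulVecLin m).comp Z.subtype)
          (fun z => hmem z.1 z.2)) := by
      rw [← LinearMap.ker_eq_bot]
      rw [Submodule.eq_bot_iff]
      intro z hz
      have hz' : m *ᵥ (z : Fin n → ℂ) = 0 := by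
        have := congrArg (Subtype.val) hz
        exact this
      have hdz : d *ᵥ (z : Fin n → ℂ) = 0 := by
        have h := LinearMap.mem_ker.mp z.2
        rwa [Matrix.mulVecLin_apply] at h
      have : (z : Fin n → ℂ) = 0 := by
        by_contra hne
        exact hno (z : Fin n → ℂ) hne hdz hz'
      exact Subtype.ext this
    have hle := LinearMap.finrank_le_finrank_of_injective hinj
    have hlt : Vt < Z := by
      apply lt_of_le_of_ne hVtZ
      intro hEq
      have hx₀Z : x₀ ∈ Z := by
        rw [hZdef, LinearMap.mem_ker, Matrix.mulVecLin_apply]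
        exact hx₀d
      have hx₀Vt : x₀ ∈ Vt := by rw [hEq]; exact hx₀Z
      have : (1 - P) *ᵥ x₀ = 0 := by
        have := hx₀Vt.2
        simpa [Matrix.mulVecLin_apply, Matrix.sub_mulVec, Matrix.one_mulVec] using this
      exact hx₀P this
    have := Submodule.finrank_lt_finrank_of_lt hlt
    omega
  obtain ⟨ζ, hζ0, hdζ, hmζ⟩ := hζex
  -- the vector w : a nonzero column of d * P
  have hdPentry : ∃ i jc, (d * P) i jc ≠ 0 := by
    by_contra hcon
    push_neg at hcon
    exact h1 (by ext i j; exact hcon i j)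
  obtain ⟨iw, jc, hiwjc⟩ := hdPentry
  obtain ⟨w, hwdef⟩ : ∃ w' : Fin n → ℂ, w' = (d * P) *ᵥ Pi.single jc 1 := ⟨_, rfl⟩
  have hw0 : w ≠ 0 := by
    intro hwz
    apply hiwjc
    have := congrFun hwz iw
    rwa [hwdef, mulVec_single_eq] at this
  have hdw : d *ᵥ w = w := by
    rw [hwdef, Matrix.mulVec_mulVec, ← Matrix.mul_assoc, hdd]
  have hPw : P *ᵥ w = w := by
    rw [hwdef, Matrix.mulVec_mulVec]
    have : P * (d * P) = d * P := by
      calc P * (d * P) = (P * d) * P := by simp only [Matrix.mul_assoc]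
      _ = (d * P) * P := by rw [← hcomm]
      _ = d * (P * P) := by simp only [Matrix.mul_assoc]
      _ = d * P := by rw [hPP]
    rw [this]
  have hmw : m *ᵥ w = w := by
    have : m *ᵥ (P *ᵥ w) = P *ᵥ w := by
      rw [Matrix.mulVec_mulVec, hmP]
    rwa [hPw] at this
  obtain ⟨ρ, hρdef⟩ : ∃ ρ' : Fin n → ℂ, ρ' = star w ᵥ* m := ⟨_, rfl⟩
  obtain ⟨b, hbdef⟩ : ∃ b' : Fin n → ℂ, b' = ζ - P *ᵥ ζ := ⟨_, rfl⟩
  have hb0 : b ≠ 0 := by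
    intro hbz
    have hPζζ : P *ᵥ ζ = ζ := by
      have := congrArg (fun v => v + P *ᵥ ζ) hbz
      simpa [hbdef, sub_add_cancel] using this.symm
    apply hζ0
    have : m *ᵥ (P *ᵥ ζ) = P *ᵥ ζ := by rw [Matrix.mulVec_mulVec, hmP]
    rw [hPζζ, hmζ] at this
    exact this.symm
  have hPb : P *ᵥ b = 0 := by
    rw [hbdef, Matrix.mulVec_sub, Matrix.mulVec_mulVec, hPP, sub_self]
  have hdb : d *ᵥ b = 0 := by
    rw [hbdef, Matrix.mulVec_sub, hdζ, Matrix.mulVec_mulVec, hcomm, ← Matrix.mulVec_mulVec,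
      hdζ, Matrix.mulVec_zero, sub_self]
  have hmb : m *ᵥ b = -(P *ᵥ ζ) := by
    rw [hbdef, Matrix.mulVec_sub, hmζ, Matrix.mulVec_mulVec, hmP, zero_sub]
  -- pointwise support facts
  have hfw : ∀ i, f i = 0 → w i = 0 := by
    intro i hfi
    have := congrFun hdw i
    rw [hddef, Matrix.mulVec_diagonal, hfi, zero_mul] at this
    exact this.symm
  have hfζ : ∀ i, f i = 1 → ζ i = 0 := by
    intro i hfi
    have := congrFun hdζ i
    rw [hddef, Matrix.mulVec_diagonal, hfi, one_mul] at this
    simpa using this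
  have hfb : ∀ i, f i = 1 → b i = 0 := by
    intro i hfi
    have := congrFun hdb i
    rw [hddef, Matrix.mulVec_diagonal, hfi, one_mul] at this
    simpa using this
  have hρd : ρ ᵥ* d = ρ := by
    have hswd' : star w ᵥ* (1 - d) = 0 := by
      have : (1 - d) *ᵥ w = 0 := by
        rw [Matrix.sub_mulVec, Matrix.one_mulVec, hdw, sub_self]
      rw [← hd'H, ← Matrix.star_mulVec, this]
      simp
    have hρ1 : ρ = star w ᵥ* (d * q * d) := by
      rw [hρdef, hmdef, Matrix.vecMul_add]
      have : star w ᵥ* ((1 - d) * q * (1 - d)) = 0 := by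
        rw [show (1 - d) * q * (1 - d) = (1 - d) * (q * (1 - d)) by
          simp only [Matrix.mul_assoc], ← Matrix.vecMul_vecMul, hswd']
        simp
      rw [this, add_zero]
    calc ρ ᵥ* d = star w ᵥ* (m * d) := by rw [hρdef, Matrix.vecMul_vecMul]
    _ = star w ᵥ* (d * q * d) := by rw [hmd]
    _ = ρ := hρ1.symm
  have hfρ : ∀ j, f j = 0 → ρ j = 0 := by
    intro j hfj
    have := congrFun hρd j
    rw [hddef, Matrix.vecMul_diagonal, hfj, mul_zero] at this
    exact this.symm
  -- more vecMul facts
  have hswP : star w ᵥ* P = star w := by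
    have h := Matrix.star_mulVec Pᴴ w
    rw [Matrix.conjTranspose_conjTranspose, hPH, hPw] at h
    exact h.symm
  have hsbP : star b ᵥ* P = 0 := by
    have h := Matrix.star_mulVec Pᴴ b
    rw [Matrix.conjTranspose_conjTranspose, hPH, hPb] at h
    rw [← h]
    simp
  have hρm : ρ ᵥ* m = ρ := by
    rw [hρdef, Matrix.vecMul_vecMul, hmm2]
  have hρP : ρ ᵥ* P = star w := by
    rw [hρdef, Matrix.vecMul_vecMul, hmP, hswP]
  have hsbm : star b ᵥ* m = 0 := by
    have hsb : star b = star ζ - star (P *ᵥ ζ) := by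
      rw [hbdef]; exact star_sub _ _
    rw [hsb, Matrix.sub_vecMul, Matrix.star_mulVec, hPH, Matrix.vecMul_vecMul, hPm, sub_self]
  -- scalar quantities
  set ωr : ℝ := ∑ i, Complex.normSq (w i) with hωrdef
  have hωr0 : 0 < ωr := star_dot_self_pos hw0
  set βr : ℝ := ∑ i, Complex.normSq (b i) with hβrdef
  have hβr0 : 0 ≤ βr := star_dot_self_nonneg b
  have hsww : star w ⬝ᵥ w = (ωr : ℂ) := star_dot_self w
  have hsbb : star b ⬝ᵥ b = (βr : ℂ) := star_dot_self b
  have hswζ : star w ⬝ᵥ ζ = 0 := by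
    rw [dotProduct]
    apply Finset.sum_eq_zero
    intro i _
    rcases hf i with h | h
    · rw [Pi.star_apply, hfw i h]; simp
    · rw [hfζ i h]; simp
  have hswb : star w ⬝ᵥ b = 0 := by
    rw [dotProduct]
    apply Finset.sum_eq_zero
    intro i _
    rcases hf i with h | h
    · rw [Pi.star_apply, hfw i h]; simp
    · rw [hfb i h]; simp
  have hsbw : star b ⬝ᵥ w = 0 := by
    rw [dotProduct]
    apply Finset.sum_eq_zero
    intro i _
    rcases hf i with h | h
    · rw [hfw i h]; simp
    · rw [Pi.star_apply, hfb i h]; simp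
  have hρζ : ρ ⬝ᵥ ζ = 0 := by
    rw [dotProduct]
    apply Finset.sum_eq_zero
    intro i _
    rcases hf i with h | h
    · rw [hfρ i h]; simp
    · rw [hfζ i h]; simp
  have hsbζ : star b ⬝ᵥ ζ = (βr : ℂ) := by
    have hζsplit : ζ = b + P *ᵥ ζ := by rw [hbdef]; abel
    calc star b ⬝ᵥ ζ = star b ⬝ᵥ (b + P *ᵥ ζ) := by rw [← hζsplit]
    _ = star b ⬝ᵥ b + star b ⬝ᵥ (P *ᵥ ζ) := dotProduct_add _ _ _
    _ = (βr : ℂ) := by rw [hsbb, Matrix.dotProduct_mulVec, hsbP, zero_dotProduct, add_zero]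
  have hρw : ρ ⬝ᵥ w = (ωr : ℂ) := by
    rw [hρdef, ← Matrix.dotProduct_mulVec, hmw, hsww]
  have hρb : ρ ⬝ᵥ b = 0 := by
    rw [hρdef, ← Matrix.dotProduct_mulVec, hmb, dotProduct_neg,
      Matrix.dotProduct_mulVec, hswP, hswζ, neg_zero]
  -- distinguished indices
  obtain ⟨i₀, hwi₀⟩ := Function.ne_iff.mp hw0
  obtain ⟨j₀, hbj₀⟩ := Function.ne_iff.mp hb0
  simp only [Pi.zero_apply] at hwi₀ hbj₀
  have hfi₀ : f i₀ = 1 := by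
    rcases hf i₀ with h | h
    · exact absurd (hfw i₀ h) hwi₀
    · exact h
  have hfj₀ : f j₀ = 0 := by
    rcases hf j₀ with h | h
    · exact h
    · exact absurd (hfb j₀ h) hbj₀
  have hPi₀j₀ : P i₀ j₀ = 0 := by
    have h := congrFun (congrFun hcomm i₀) j₀
    rw [hddef] at h
    rw [Matrix.diagonal_mul, Matrix.mul_diagonal, hfi₀, hfj₀, one_mul, mul_zero] at h
    exact h
  have hwj₀ : w j₀ = 0 := hfw j₀ hfj₀
  have hbi₀ : b i₀ = 0 := hfb i₀ hfi₀
  -- choice of ε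
  set ωi : ℂ := ((ωr⁻¹ : ℝ) : ℂ) with hωidef
  have hωiω : ωi * (ωr : ℂ) = 1 := by
    rw [hωidef, ← Complex.ofReal_mul, inv_mul_cancel₀ (ne_of_gt hωr0), Complex.ofReal_one]
  have hωi0 : ωi ≠ 0 := by
    rw [hωidef]
    simpa using inv_ne_zero (ne_of_gt hωr0)
  set pp : Fin n → Fin n → Polynomial ℂ := fun i j =>
    Polynomial.C (P i j * ωi) +
      Polynomial.C (ωi * (w i * star (b j) + b i * star (w j))) * Polynomial.X +
      Polynomial.C ((βr : ℂ) * (P i j - ωi * (w i * star (w j))) + b i * star (b j)) *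
        Polynomial.X ^ 2 with hppdef
  have hppne : ∀ i j, P i j ≠ 0 → pp i j ≠ 0 := by
    intro i j hPij hzero
    have h := congrArg (Polynomial.eval 0) hzero
    rw [hppdef] at h
    simp at h
    rcases h with h | h
    · exact hPij h
    · exact hωi0 h
  set badSet : Set ℝ :=
    {0} ∪ ⋃ i, ⋃ j, {t : ℝ | P i j ≠ 0 ∧ (pp i j).eval ((t : ℝ) : ℂ) = 0} with hbaddef
  have hbadfin : badSet.Finite := by
    rw [hbaddef]
    apply Set.Finite.union (Set.finite_singleton 0)
    apply Set.finite_iUnion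
    intro i
    apply Set.finite_iUnion
    intro j
    by_cases hPij : P i j = 0
    · convert Set.finite_empty
      ext t
      simp [hPij]
    · have hfin := Polynomial.finite_setOf_isRoot (hppne i j hPij)
      have hsub : {t : ℝ | P i j ≠ 0 ∧ (pp i j).eval ((t : ℝ) : ℂ) = 0} ⊆
          (fun t : ℝ => (t : ℂ)) ⁻¹' {z | (pp i j).IsRoot z} := by
        intro t ht
        exact ht.2
      exact Set.Finite.subset
        (Set.Finite.preimage (Set.injOn_of_injective Complex.ofReal_injective) hfin) hsub
  obtain ⟨ε, hε⟩ := (hbadfin.infinite_compl).nonempty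
  have hεmem : ε ∉ badSet := hε
  have hε0 : ε ≠ 0 := by
    intro h
    apply hεmem
    rw [hbaddef]
    exact Or.inl (by simp [h])
  have hεgood : ∀ i j, P i j ≠ 0 → (pp i j).eval ((ε : ℝ) : ℂ) ≠ 0 := by
    intro i j hPij heval
    apply hεmem
    rw [hbaddef]
    refine Or.inr ?_
    rw [Set.mem_iUnion]
    refine ⟨i, ?_⟩
    rw [Set.mem_iUnion]
    exact ⟨j, hPij, heval⟩
  -- complex scalar setup
  set εc : ℂ := ((ε : ℝ) : ℂ) with hεcdef
  have hεc0 : εc ≠ 0 := by rw [hεcdef]; simpa using hε0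
  set Nr : ℝ := ωr⁻¹ + ε ^ 2 * βr with hNrdef
  have hNr0 : 0 < Nr := by
    rw [hNrdef]
    have h1 : 0 < ωr⁻¹ := inv_pos.mpr hωr0
    nlinarith [sq_nonneg ε, mul_nonneg (sq_nonneg ε) hβr0]
  set Ni : ℂ := ((Nr⁻¹ : ℝ) : ℂ) with hNidef
  set Nc : ℂ := ((Nr : ℝ) : ℂ) with hNcdef
  have hNiNc : Ni * Nc = 1 := by
    rw [hNidef, hNcdef, ← Complex.ofReal_mul, inv_mul_cancel₀ (ne_of_gt hNr0),
      Complex.ofReal_one]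
  have hNi0 : Ni ≠ 0 := by rw [hNidef]; simpa using inv_ne_zero (ne_of_gt hNr0)
  have hNcval : Nc = ωi + εc * (εc * (βr : ℂ)) := by
    rw [hNcdef, hNrdef, hωidef, hεcdef]
    push_cast
    ring
  have hNN2 : Ni * (ωi + εc * (εc * (βr : ℂ))) = 1 := by rw [← hNcval]; exact hNiNc
  have hstar_ωi : star ωi = ωi := by rw [hωidef, Complex.star_def, Complex.conj_ofReal]
  have hstar_εc : star εc = εc := by rw [hεcdef, Complex.star_def, Complex.conj_ofReal]
  have hstar_Ni : star Ni = Ni := by rw [hNidef, Complex.star_def, Complex.conj_ofReal]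
  -- the tilted vector u
  obtain ⟨u, hudef⟩ : ∃ u' : Fin n → ℂ, u' = ωi • w + εc • b := ⟨_, rfl⟩
  have hstaru : star u = ωi • star w + εc • star b := by
    rw [hudef, star_add, star_smul, star_smul, hstar_ωi, hstar_εc]
  have hsuu : star u ⬝ᵥ u = Nc := by
    rw [hstaru, hudef]
    simp only [add_dotProduct, dotProduct_add, smul_dotProduct,
      dotProduct_smul, smul_eq_mul]
    rw [hsww, hswb, hsbw, hsbb, hNcval]
    linear_combination ωi * hωiω
  have hswu : star w ⬝ᵥ u = 1 := by
    rw [hudef]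
    simp only [dotProduct_add, dotProduct_smul, smul_eq_mul]
    rw [hsww, hswb]
    linear_combination hωiω
  have hρu : ρ ⬝ᵥ u = 1 := by
    rw [hudef]
    simp only [dotProduct_add, dotProduct_smul, smul_eq_mul]
    rw [hρw, hρb]
    linear_combination hωiω
  have hsuζ : star u ⬝ᵥ ζ = εc * (βr : ℂ) := by
    rw [hstaru]
    simp only [add_dotProduct, smul_dotProduct, smul_eq_mul]
    rw [hswζ, hsbζ]
    ring
  have hsum : star u ᵥ* m = ωi • ρ := by
    rw [hstaru, Matrix.add_vecMul, Matrix.smul_vecMul, Matrix.smul_vecMul, hsbm, smul_zero,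
      add_zero, ← hρdef]
  have hPu : P *ᵥ u = ωi • w := by
    rw [hudef, Matrix.mulVec_add, Matrix.mulVec_smul, Matrix.mulVec_smul, hPw, hPb, smul_zero,
      add_zero]
  have hmu : m *ᵥ u = ωi • w - εc • (P *ᵥ ζ) := by
    rw [hudef, Matrix.mulVec_add, Matrix.mulVec_smul, Matrix.mulVec_smul, hmw, hmb, smul_neg,
      ← sub_eq_add_neg]
  -- the matrices
  obtain ⟨Www, hWwwdef⟩ : ∃ X : Matrix (Fin n) (Fin n) ℂ, X = vecMulVec w (star w) := ⟨_, rfl⟩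
  obtain ⟨Uu, hUudef⟩ : ∃ X : Matrix (Fin n) (Fin n) ℂ, X = vecMulVec u (star u) := ⟨_, rfl⟩
  obtain ⟨Vv, hVvdef⟩ : ∃ X : Matrix (Fin n) (Fin n) ℂ, X = vecMulVec ζ ρ := ⟨_, rfl⟩
  obtain ⟨Q, hQdef⟩ : ∃ X : Matrix (Fin n) (Fin n) ℂ, X = P - ωi • Www := ⟨_, rfl⟩
  obtain ⟨M, hMdef⟩ : ∃ X : Matrix (Fin n) (Fin n) ℂ, X = Q + Ni • Uu := ⟨_, rfl⟩
  obtain ⟨r, hrdef⟩ : ∃ X : Matrix (Fin n) (Fin n) ℂ, X = m + εc • Vv := ⟨_, rfl⟩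
  -- idempotency of r
  have hmV : m * Vv = 0 := by rw [hVvdef, mul_vmv, hmζ, vmv_zero_left]
  have hVm : Vv * m = Vv := by rw [hVvdef, vmv_mul, hρm]
  have hVV : Vv * Vv = 0 := by rw [hVvdef, vmv_mul_vmv, hρζ, zero_smul]
  have hrr : r * r = r := by
    rw [hrdef, Matrix.add_mul, Matrix.mul_add, Matrix.mul_add]
    rw [hmm2, mul_smul_comm, hmV, smul_zero, smul_mul_assoc, hVm, smul_mul_assoc,
      mul_smul_comm, hVV, smul_zero, smul_zero]
    rw [add_zero, add_zero]
  have hrm : r * m = r := by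
    rw [hrdef, Matrix.add_mul, hmm2, smul_mul_assoc, hVm]
  have hmr : m * r = m := by
    rw [hrdef, Matrix.mul_add, hmm2, mul_smul_comm, hmV, smul_zero, add_zero]
  have hrdiag : ∀ i, r i i = q i i := by
    intro i
    rw [hrdef, Matrix.add_apply, Matrix.smul_apply, hVvdef, Matrix.vecMulVec_apply, hmdiag i]
    rcases hf i with h | h
    · rw [hfρ i h, mul_zero, smul_zero, add_zero]
    · rw [hfζ i h, zero_mul, smul_zero, add_zero]
  -- hermitian facts
  have hWwwH : Wwwᴴ = Www := by rw [hWwwdef, vmv_conjTranspose, star_star]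
  have hUuH : Uuᴴ = Uu := by rw [hUudef, vmv_conjTranspose, star_star]
  have hQH : Qᴴ = Q := by
    rw [hQdef, Matrix.conjTranspose_sub, hPH, Matrix.conjTranspose_smul, hWwwH, hstar_ωi]
  have hMH : Mᴴ = M := by
    rw [hMdef, Matrix.conjTranspose_add, hQH, Matrix.conjTranspose_smul, hUuH, hstar_Ni]
  -- algebra of Q and M
  have hPWww : P * Www = Www := by rw [hWwwdef, mul_vmv, hPw]
  have hWwwP : Www * P = Www := by rw [hWwwdef, vmv_mul, hswP]
  have hWwwWww : Www * Www = (ωr : ℂ) • Www := by rw [hWwwdef, vmv_mul_vmv, hsww]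
  have hQQ : Q * Q = Q := by
    have hexp : Q * Q = P - ωi • Www - ωi • Www + (ωi * ωi * (ωr : ℂ)) • Www := by
      rw [hQdef, Matrix.sub_mul, Matrix.mul_sub, Matrix.mul_sub, hPP, mul_smul_comm, hPWww,
        smul_mul_assoc, hWwwP, smul_mul_assoc, mul_smul_comm, hWwwWww, smul_smul, smul_smul]
      abel
    rw [hexp, show ωi * ωi * (ωr : ℂ) = ωi from by linear_combination ωi * hωiω, hQdef]
    abel
  have hWwwu : Www *ᵥ u = w := by rw [hWwwdef, vmv_mulVec, hswu, one_smul]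
  have hQu : Q *ᵥ u = 0 := by
    rw [hQdef, Matrix.sub_mulVec, Matrix.smul_mulVec, hWwwu, hPu, sub_self]
  have hsuQ : star u ᵥ* Q = 0 := by
    have h := Matrix.star_mulVec Qᴴ u
    rw [Matrix.conjTranspose_conjTranspose, hQH, hQu] at h
    rw [← h]
    simp
  have hUuUu : Uu * Uu = Nc • Uu := by rw [hUudef, vmv_mul_vmv, hsuu]
  have hQUu : Q * Uu = 0 := by rw [hUudef, mul_vmv, hQu, vmv_zero_left]
  have hUuQ : Uu * Q = 0 := by rw [hUudef, vmv_mul, hsuQ, vmv_zero_right]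
  have hMM : M * M = M := by
    have hexp : M * M = Q + (Ni * Ni * Nc) • Uu := by
      rw [hMdef, Matrix.add_mul, Matrix.mul_add, Matrix.mul_add, hQQ, mul_smul_comm, hQUu,
        smul_zero, add_zero, smul_mul_assoc, hUuQ, smul_zero, zero_add, smul_mul_assoc,
        mul_smul_comm, hUuUu, smul_smul, smul_smul]
    rw [hexp, show Ni * Ni * Nc = Ni from by linear_combination Ni * hNiNc, hMdef]
  -- r * M = M
  have hmWww : m * Www = Www := by rw [hWwwdef, mul_vmv, hmw]
  have hmQ : m * Q = Q := by rw [hQdef, Matrix.mul_sub, hmP, mul_smul_comm, hmWww]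
  have hρWww : ρ ᵥ* Www = (ωr : ℂ) • star w := by rw [hWwwdef, vecMul_vmv, hρw]
  have hρQ : ρ ᵥ* Q = 0 := by
    rw [hQdef, Matrix.vecMul_sub, hρP, vecMul_smul_mat, hρWww, smul_smul, hωiω, one_smul,
      sub_self]
  have hVQ : Vv * Q = 0 := by rw [hVvdef, vmv_mul, hρQ, vmv_zero_right]
  have hrQ : r * Q = Q := by
    rw [hrdef, Matrix.add_mul, hmQ, smul_mul_assoc, hVQ, smul_zero, add_zero]
  have hVu : Vv *ᵥ u = ζ := by rw [hVvdef, vmv_mulVec, hρu, one_smul]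
  have hru : r *ᵥ u = u := by
    rw [hrdef, Matrix.add_mulVec, hmu, Matrix.smul_mulVec, hVu, hudef, hbdef, smul_sub]
    abel
  have hrUu : r * Uu = Uu := by rw [hUudef, mul_vmv, hru]
  have hrM : r * M = M := by
    rw [hMdef, Matrix.mul_add, hrQ, mul_smul_comm, hrUu]
  -- M * r = r
  have hQm : Q * m = m - ωi • vecMulVec w ρ := by
    rw [hQdef, Matrix.sub_mul, hPm, smul_mul_assoc, hWwwdef, vmv_mul, ← hρdef]
  have hUum : Uu * m = ωi • vecMulVec u ρ := by
    rw [hUudef, vmv_mul, hsum, vmv_smul_right]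
  have hMm : M * m = m - ωi • vecMulVec w ρ + (Ni * ωi) • vecMulVec u ρ := by
    rw [hMdef, Matrix.add_mul, hQm, smul_mul_assoc, hUum, smul_smul]
  have hQζ : Q *ᵥ ζ = P *ᵥ ζ := by
    have h1 : Www *ᵥ ζ = 0 := by rw [hWwwdef, vmv_mulVec, hswζ, zero_smul]
    rw [hQdef, Matrix.sub_mulVec, Matrix.smul_mulVec, h1, smul_zero, sub_zero]
  have hMζ : M *ᵥ ζ = P *ᵥ ζ + (Ni * (εc * (βr : ℂ))) • u := by
    have h1 : Uu *ᵥ ζ = (εc * (βr : ℂ)) • u := by rw [hUudef, vmv_mulVec, hsuζ]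
    rw [hMdef, Matrix.add_mulVec, hQζ, Matrix.smul_mulVec, h1, smul_smul]
  have hMV : M * Vv = vecMulVec (P *ᵥ ζ) ρ + (Ni * (εc * (βr : ℂ))) • vecMulVec u ρ := by
    rw [hVvdef, mul_vmv, hMζ, vmv_add_left, vmv_smul_left]
  have hWu : vecMulVec u ρ = ωi • vecMulVec w ρ + εc • vecMulVec b ρ := by
    rw [hudef, vmv_add_left, vmv_smul_left, vmv_smul_left]
  have hWζ : vecMulVec ζ ρ = vecMulVec b ρ + vecMulVec (P *ᵥ ζ) ρ := by
    have hsum2 : b + P *ᵥ ζ = ζ := by rw [hbdef]; abel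
    rw [← vmv_add_left, hsum2]
  have hMr : M * r = r := by
    rw [hrdef, Matrix.mul_add, hMm, mul_smul_comm, hMV, hVvdef, hWζ, hWu]
    match_scalars
    any_goals ring
    any_goals linear_combination ωi * hNN2
    any_goals linear_combination εc * hNN2
  -- M is the range projection of r
  obtain ⟨hrPH, hrPr, hrrP, _⟩ := rangeProj_spec r hrr
  have hMeq : rangeProj r = M :=
    proj_unique r (rangeProj r) M hrPH hMH hrPr hrrP hMr hrM
  -- entrywise formula for M
  have hMapply : ∀ i j, M i j = P i j - ωi * (w i * star (w j)) + Ni * (u i * star (u j)) := by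
    intro i j
    rw [hMdef, hQdef, hWwwdef, hUudef]
    rw [Matrix.add_apply, Matrix.sub_apply, Matrix.smul_apply, Matrix.smul_apply,
      Matrix.vecMulVec_apply, Matrix.vecMulVec_apply]
    simp only [Pi.star_apply, smul_eq_mul]
  have hueval : ∀ i, u i = ωi * w i + εc * b i := by
    intro i
    rw [hudef]
    simp
  have hstarueval : ∀ j, star (u j) = ωi * star (w j) + εc * star (b j) := by
    intro j
    have h := congrFun hstaru j
    simpa using h
  have hMNc : ∀ i j, M i j * Nc = (pp i j).eval εc := by
    intro i j
    rw [hMapply i j, hppdef]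
    simp only [Polynomial.eval_add, Polynomial.eval_mul, Polynomial.eval_C, Polynomial.eval_X,
      Polynomial.eval_pow]
    rw [hueval i, hstarueval j, hNcval]
    linear_combination ((ωi * w i + εc * b i) * (ωi * star (w j) + εc * star (b j))) * hNN2
  have hNc0 : Nc ≠ 0 := by rw [hNcdef]; simpa using ne_of_gt hNr0
  have hA : ∀ i j, P i j ≠ 0 → M i j ≠ 0 := by
    intro i j hPij hM0
    apply hεgood i j hPij
    rw [← hMNc i j, hM0, zero_mul]
  have hMbreak : M i₀ j₀ ≠ 0 := by
    rw [hMapply i₀ j₀, hPi₀j₀, hwj₀, hueval i₀, hstarueval j₀, hbi₀, hwj₀]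
    simp only [star_zero, mul_zero, zero_mul, add_zero, zero_add, zero_sub, sub_zero, neg_zero]
    exact mul_ne_zero hNi0 (mul_ne_zero (mul_ne_zero hωi0 hwi₀)
      (mul_ne_zero hεc0 (star_ne_zero.mpr hbj₀)))
  -- assemble the conclusion
  refine ⟨r, m, hrr, hrdiag, ?_, ?_, ?_⟩
  · intro c hc hcM
    rw [hMeq] at hcM
    rw [← hPdef]
    ext i j
    rw [diag_mul_apply hc, mul_diag_apply hc]
    by_cases hPij : P i j = 0
    · rw [hPij, mul_zero, zero_mul]
    · have hcij : c i i = c j j := by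
        have h := congrFun (congrFun hcM i) j
        rw [diag_mul_apply hc, mul_diag_apply hc, mul_comm (M i j) (c j j)] at h
        exact mul_right_cancel₀ (hA i j hPij) h
      rw [hcij, mul_comm]
  · refine ⟨d, ?_, ?_, ?_⟩
    · rw [hddef]; exact Matrix.isDiag_diagonal f
    · rw [← hPdef]; exact hcomm
    · rw [hMeq]
      intro hcon
      have h := congrFun (congrFun hcon i₀) j₀
      rw [hddef, Matrix.diagonal_mul, Matrix.mul_diagonal, hfi₀, hfj₀, one_mul, mul_zero] at h
      exact hMbreak h
  · intro t _ _
    have hab : ((1 : ℂ) - (t : ℂ)) + (t : ℂ) = 1 := by ring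
    refine ⟨⟨?_, ?_⟩, ?_, ?_⟩
    · have hqX : q * ((1 - (t : ℂ)) • q + (t : ℂ) • m) = (1 - (t : ℂ)) • q + (t : ℂ) • m := by
        rw [Matrix.mul_add, mul_smul_comm, mul_smul_comm, hq, hqm]
      have hmX : m * ((1 - (t : ℂ)) • q + (t : ℂ) • m) = (1 - (t : ℂ)) • q + (t : ℂ) • m := by
        rw [Matrix.mul_add, mul_smul_comm, mul_smul_comm, hmq, hmm2]
      calc ((1 - (t : ℂ)) • q + (t : ℂ) • m) * ((1 - (t : ℂ)) • q + (t : ℂ) • m)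
          = (1 - (t : ℂ)) • (q * ((1 - (t : ℂ)) • q + (t : ℂ) • m)) +
            (t : ℂ) • (m * ((1 - (t : ℂ)) • q + (t : ℂ) • m)) := by
            rw [Matrix.add_mul, smul_mul_assoc, smul_mul_assoc]
      _ = ((1 - (t : ℂ)) + (t : ℂ)) • ((1 - (t : ℂ)) • q + (t : ℂ) • m) := by
            rw [hqX, hmX, add_smul]
      _ = (1 - (t : ℂ)) • q + (t : ℂ) • m := by rw [hab, one_smul]
    · intro i
      rw [Matrix.add_apply, Matrix.smul_apply, Matrix.smul_apply, hmdiag i, smul_eq_mul,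
        smul_eq_mul]
      ring
    · have hmX : m * ((1 - (t : ℂ)) • m + (t : ℂ) • r) = m := by
        rw [Matrix.mul_add, mul_smul_comm, mul_smul_comm, hmm2, hmr, ← add_smul, hab, one_smul]
      have hrX : r * ((1 - (t : ℂ)) • m + (t : ℂ) • r) = r := by
        rw [Matrix.mul_add, mul_smul_comm, mul_smul_comm, hrm, hrr, ← add_smul, hab, one_smul]
      calc ((1 - (t : ℂ)) • m + (t : ℂ) • r) * ((1 - (t : ℂ)) • m + (t : ℂ) • r)
          = (1 - (t : ℂ)) • (m * ((1 - (t : ℂ)) • m + (t : ℂ) • r)) +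
            (t : ℂ) • (r * ((1 - (t : ℂ)) • m + (t : ℂ) • r)) := by
            rw [Matrix.add_mul, smul_mul_assoc, smul_mul_assoc]
      _ = (1 - (t : ℂ)) • m + (t : ℂ) • r := by rw [hmX, hrX]
    · intro i
      rw [Matrix.add_apply, Matrix.smul_apply, Matrix.smul_apply, hmdiag i, hrdiag i,
        smul_eq_mul, smul_eq_mul]
      ring

end RedStepAux

set_option maxHeartbeats 1000000 in
/-- If `q` is a nontrivial idempotent whose range projection commutes with some
non-scalar diagonal matrix (i.e. `dim({[q]}′ ∩ D_n) > 1`), then there is an idempotent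
`r` with the same diagonal as `q`, with `{[r]}′ ∩ D_n` strictly contained in
`{[q]}′ ∩ D_n`, joined to `q` by a piecewise affine path of at most two segments inside
the set of idempotents with the diagonal of `q`. -/
theorem reduction_step (n : ℕ) (q : Matrix (Fin n) (Fin n) ℂ)
    (hq : q * q = q) (h0 : q ≠ 0) (h1 : q ≠ 1)
    (hdim : ∃ c : Matrix (Fin n) (Fin n) ℂ, c.IsDiag ∧
      c * rangeProj q = rangeProj q * c ∧ ¬∃ z : ℂ, c = z • 1) :
    ∃ r m : Matrix (Fin n) (Fin n) ℂ,
      r * r = r ∧ (∀ i, r i i = q i i) ∧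
      (∀ c : Matrix (Fin n) (Fin n) ℂ, c.IsDiag →
        c * rangeProj r = rangeProj r * c → c * rangeProj q = rangeProj q * c) ∧
      (∃ c : Matrix (Fin n) (Fin n) ℂ, c.IsDiag ∧
        c * rangeProj q = rangeProj q * c ∧ c * rangeProj r ≠ rangeProj r * c) ∧
      (∀ t : ℝ, 0 ≤ t → t ≤ 1 →
        (((1 - t : ℂ) • q + (t : ℂ) • m) * ((1 - t : ℂ) • q + (t : ℂ) • m) =
            (1 - t : ℂ) • q + (t : ℂ) • m ∧
          (∀ i, ((1 - t : ℂ) • q + (t : ℂ) • m) i i = q i i)) ∧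
        (((1 - t : ℂ) • m + (t : ℂ) • r) * ((1 - t : ℂ) • m + (t : ℂ) • r) =
            (1 - t : ℂ) • m + (t : ℂ) • r ∧
          (∀ i, ((1 - t : ℂ) • m + (t : ℂ) • r) i i = q i i))) := by
  classical
  obtain ⟨c₀, hc₀diag, hc₀comm, hc₀ns⟩ := hdim
  have hune : ∃ i j : Fin n, c₀ i i ≠ c₀ j j := by
    by_contra hcon
    push_neg at hcon
    apply hc₀ns
    rcases Nat.eq_zero_or_pos n with hn | hn
    · subst hn
      exact ⟨0, by ext i j; exact i.elim0⟩
    · refine ⟨c₀ ⟨0, hn⟩ ⟨0, hn⟩, ?_⟩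
      ext i j
      by_cases hij : i = j
      · subst hij
        rw [Matrix.smul_apply, Matrix.one_apply_eq, smul_eq_mul, mul_one]
        exact hcon i ⟨0, hn⟩
      · rw [hc₀diag hij, Matrix.smul_apply, Matrix.one_apply_ne hij, smul_eq_mul, mul_zero]
  obtain ⟨i₀, j₀, hij₀⟩ := hune
  set f : Fin n → ℂ := fun i => if c₀ i i = c₀ i₀ i₀ then 1 else 0 with hfdef
  have hf : ∀ i, f i = 0 ∨ f i = 1 := by
    intro i
    rw [hfdef]
    by_cases h : c₀ i i = c₀ i₀ i₀ <;> simp [h]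
  have hf' : ∀ i, (1 : ℂ) - f i = 0 ∨ (1 : ℂ) - f i = 1 := by
    intro i
    rcases hf i with h | h <;> rw [h] <;> simp
  obtain ⟨hPH, hPq, hqP, hPP⟩ := RedStepAux.rangeProj_spec q hq
  have hP0 : rangeProj q ≠ 0 := by
    intro h
    apply h0
    rw [← hPq, h, Matrix.zero_mul]
  have hP1 : rangeProj q ≠ 1 := by
    intro h
    apply h1
    have h2 := hqP
    rw [h, Matrix.mul_one] at h2
    exact h2
  have hcommraw : ∀ i j, (c₀ i i - c₀ j j) * rangeProj q i j = 0 := by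
    intro i j
    have h := congrFun (congrFun hc₀comm i) j
    rw [RedStepAux.diag_mul_apply hc₀diag, RedStepAux.mul_diag_apply hc₀diag] at h
    linear_combination h
  have hdPc : Matrix.diagonal f * rangeProj q = rangeProj q * Matrix.diagonal f := by
    ext i j
    rw [Matrix.diagonal_mul, Matrix.mul_diagonal]
    by_cases hfe : f i = f j
    · rw [hfe, mul_comm]
    · have hcne : c₀ i i ≠ c₀ j j := by
        intro hcc
        apply hfe
        rw [hfdef]
        simp only [hcc]
      have hPij : rangeProj q i j = 0 := by
        rcases mul_eq_zero.mp (hcommraw i j) with h | h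
        · exact absurd (sub_eq_zero.mp h) hcne
        · exact h
      rw [hPij, mul_zero, zero_mul]
  have h1d : Matrix.diagonal (fun i => (1 : ℂ) - f i) = 1 - Matrix.diagonal f := by
    rw [← Matrix.diagonal_one, ← Matrix.diagonal_sub]
  have hd'Pc : Matrix.diagonal (fun i => (1 : ℂ) - f i) * rangeProj q =
      rangeProj q * Matrix.diagonal (fun i => (1 : ℂ) - f i) := by
    rw [h1d, Matrix.sub_mul, Matrix.mul_sub, Matrix.one_mul, Matrix.mul_one, hdPc]
  have hfi₀1 : f i₀ = 1 := by rw [hfdef]; simp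
  have hfj₀0 : f j₀ = 0 := by
    rw [hfdef]
    simp only [ite_eq_right_iff]
    intro h
    exact absurd h.symm hij₀
  have hd0 : Matrix.diagonal f ≠ 0 := by
    intro h
    have := congrFun (congrFun h i₀) i₀
    rw [Matrix.diagonal_apply_eq, hfi₀1] at this
    simpa using this
  have hd'0 : (1 : Matrix (Fin n) (Fin n) ℂ) - Matrix.diagonal f ≠ 0 := by
    intro h
    have := congrFun (congrFun h j₀) j₀
    rw [Matrix.sub_apply, Matrix.one_apply_eq, Matrix.diagonal_apply_eq, hfj₀0] at this
    simpa using this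
  by_cases hcase1 : Matrix.diagonal f * rangeProj q ≠ 0 ∧
      (1 - Matrix.diagonal f) * (1 - rangeProj q) ≠ 0
  · exact RedStepAux.key q hq f hf hdPc hcase1.1 hcase1.2
  · have hkey2 : Matrix.diagonal (fun i => (1 : ℂ) - f i) * rangeProj q ≠ 0 ∧
        (1 - Matrix.diagonal (fun i => (1 : ℂ) - f i)) * (1 - rangeProj q) ≠ 0 := by
      have h1d' : (1 : Matrix (Fin n) (Fin n) ℂ) - Matrix.diagonal (fun i => (1 : ℂ) - f i) =
          Matrix.diagonal f := by
        rw [h1d]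
        abel
      rw [h1d', h1d]
      by_cases hdP : Matrix.diagonal f * rangeProj q = 0
      · constructor
        · rw [Matrix.sub_mul, Matrix.one_mul, hdP, sub_zero]
          exact hP0
        · rw [Matrix.mul_sub, Matrix.mul_one, hdP, sub_zero]
          exact hd0
      · have hd'P' : (1 - Matrix.diagonal f) * (1 - rangeProj q) = 0 := by
          by_contra hne
          exact hcase1 ⟨hdP, hne⟩
        constructor
        · intro hzero
          apply hd'0
          have hsplit : (1 - Matrix.diagonal f) =
              (1 - Matrix.diagonal f) * rangeProj q +
                (1 - Matrix.diagonal f) * (1 - rangeProj q) := by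
            rw [← Matrix.mul_add]
            simp
          rw [hsplit, hzero, hd'P', add_zero]
        · intro hzero
          apply hP1
          have hsplit : (1 : Matrix (Fin n) (Fin n) ℂ) - rangeProj q =
              Matrix.diagonal f * (1 - rangeProj q) +
                (1 - Matrix.diagonal f) * (1 - rangeProj q) := by
            rw [← Matrix.add_mul]
            simp
          have h2 : (1 : Matrix (Fin n) (Fin n) ℂ) - rangeProj q = 0 := by
            rw [hsplit, hzero, hd'P', add_zero]
          have h3 := sub_eq_zero.mp h2
          exact h3.symm
    exact RedStepAux.key q hq (fun i => (1 : ℂ) - f i) hf' hd'Pc hkey2.1 hkey2.2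
end

section
/- Let d = cos²θ · e + sin²θ · e^⊥ where e is a diagonal rank-n projection in M_{2n}(ℂ) and θ ∈ [0, π/2]. Then the set of orthogonal projections p in M_{2n}(ℂ) with E(p) = d is path-connected. -/
noncomputable section
namespace TwoValuedProj
open Matrix Complex Polynomial
open scoped ComplexOrder

variable {m : Type*} [Fintype m] [DecidableEq m]

/-- helper to build `JoinedIn` from a real-parametrized path -/
lemma joinedIn_segment {X : Type*} [TopologicalSpace X] {S : Set X} (f : ℝ → X)
    (hc : Continuous f) (hm : ∀ t : ℝ, 0 ≤ t → t ≤ 1 → f t ∈ S) :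
    JoinedIn S (f 0) (f 1) :=
  JoinedIn.ofLine hc.continuousOn rfl rfl
    (by rintro x ⟨t, ht, rfl⟩; exact hm t ht.1 ht.2)

lemma sum_conj_mul_eq_zero {ι : Type*} [Fintype ι] {f : ι → ℂ}
    (h : ∑ j, (starRingEnd ℂ) (f j) * f j = 0) : ∀ j, f j = 0 := by
  have h2 : ∑ j, (Complex.normSq (f j) : ℂ) = 0 := by
    simpa only [Complex.normSq_eq_conj_mul_self] using h
  have h3 : ((∑ j, Complex.normSq (f j) : ℝ) : ℂ) = 0 := by push_cast; exact h2
  rw [Complex.ofReal_eq_zero] at h3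
  intro j
  have h4 := (Finset.sum_eq_zero_iff_of_nonneg
    (fun i _ => Complex.normSq_nonneg (f i))).mp h3 j (Finset.mem_univ j)
  exact Complex.normSq_eq_zero.mp h4

/-- the set of unitary matrices -/
def uSet (m : Type*) [Fintype m] [DecidableEq m] : Set (Matrix m m ℂ) :=
  {U | Uᴴ * U = 1 ∧ U * Uᴴ = 1}

lemma exists_good_phase (W : Matrix m m ℂ) :
    ∃ z : ℂ, ‖z‖ = 1 ∧ (1 + z • W).det ≠ 0 := by
  classical
  set p : Polynomial ℂ := (1 + (X : ℂ[X]) • W.map C).det with hp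
  have hpe : ∀ z : ℂ, p.eval z = (1 + z • W).det := by
    intro z
    have h1 := RingHom.map_det (evalRingHom z) (1 + (X : ℂ[X]) • W.map C)
    have h2 : (evalRingHom z).mapMatrix (1 + (X : ℂ[X]) • W.map C) = 1 + z • W := by
      ext i j
      simp only [RingHom.mapMatrix_apply, Matrix.map_apply, Matrix.add_apply,
        Matrix.smul_apply, Matrix.one_apply, coe_evalRingHom, smul_eq_mul]
      split_ifs <;>
        simp only [eval_add, eval_one, eval_zero, eval_mul, eval_X, eval_C, zero_add]
    rw [hp]
    simpa [h2] using h1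
  have hp0 : p ≠ 0 := by
    intro h
    have h1 := hpe 0
    rw [h] at h1
    simp at h1
  set N := Multiset.card p.roots with hN
  set f : Fin (N + 1) → ℂ :=
    fun j => Complex.exp ((Real.pi * j / (N + 1) : ℝ) * Complex.I) with hf
  have hval : ∀ j : Fin (N + 1), 0 ≤ (Real.pi * j / (N+1) : ℝ) ∧
      (Real.pi * j / (N+1) : ℝ) < Real.pi := by
    intro j
    have hπ := Real.pi_pos
    constructor
    · positivity
    · rw [div_lt_iff₀ (by positivity)]
      have : (j : ℝ) < (N : ℝ) + 1 := by exact_mod_cast j.2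
      nlinarith
  have hinj : Function.Injective f := by
    intro j j' h
    rw [hf] at h
    obtain ⟨k, hk⟩ := Complex.exp_eq_exp_iff_exists_int.mp h
    have hI : (((Real.pi * j / (N+1) : ℝ) - (Real.pi * j' / (N+1) : ℝ) - (k : ℝ) * (2 * Real.pi) : ℝ) : ℂ) * Complex.I = 0 := by
      push_cast at hk ⊢
      linear_combination hk
    rw [mul_eq_zero] at hI
    rcases hI with hI | hI
    · rw [Complex.ofReal_eq_zero] at hI
      have hb := hval j
      have hb' := hval j'
      have hπ := Real.pi_pos
      have hk0 : k = 0 := by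
        have h1 : (-1 : ℝ) < (k : ℝ) := by nlinarith
        have h2 : (k : ℝ) < 1 := by nlinarith
        have h1' : (-1 : ℤ) < k := by exact_mod_cast h1
        have h2' : k < 1 := by exact_mod_cast h2
        omega
      rw [hk0] at hI
      have heq : Real.pi * j / (N+1) = Real.pi * j' / (N+1) := by
        push_cast at hI
        linarith
      have hden : ((N : ℝ) + 1) ≠ 0 := by positivity
      have hπ' : Real.pi ≠ 0 := ne_of_gt hπ
      field_simp at heq
      exact Fin.ext (by norm_cast at heq)
    · exact absurd hI Complex.I_ne_zero
  have hex : ∃ j, p.eval (f j) ≠ 0 := by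
    by_contra hall
    push_neg at hall
    have hsub : Finset.univ.image f ⊆ p.roots.toFinset := by
      intro w hw
      rw [Finset.mem_image] at hw
      obtain ⟨j, _, rfl⟩ := hw
      rw [Multiset.mem_toFinset, Polynomial.mem_roots']
      exact ⟨hp0, hall j⟩
    have h1 : N + 1 ≤ p.roots.toFinset.card := by
      have := Finset.card_le_card hsub
      rwa [Finset.card_image_of_injective _ hinj, Finset.card_univ, Fintype.card_fin] at this
    have h2 := Multiset.toFinset_card_le p.roots
    omega
  obtain ⟨j, hj⟩ := hex
  refine ⟨f j, Complex.norm_exp_ofReal_mul_I _, ?_⟩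
  rw [← hpe]
  exact hj


lemma uSet_one : (1 : Matrix m m ℂ) ∈ uSet m := by
  constructor <;> simp [uSet]

lemma unitary_joinedIn (W : Matrix m m ℂ) (hW : W ∈ uSet m) :
    JoinedIn (uSet m) W 1 := by
  classical
  obtain ⟨z, hz1, hzdet⟩ := exists_good_phase W
  have hzz : star z * z = 1 := by
    rw [Complex.star_def, ← Complex.normSq_eq_conj_mul_self, ← Complex.sq_norm, hz1]
    norm_num
  set W' : Matrix m m ℂ := z • W with hW'def
  have hW'1 : W'ᴴ * W' = 1 := by
    rw [hW'def, conjTranspose_smul, Matrix.smul_mul, Matrix.mul_smul, smul_smul,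
      hW.1, hzz, one_smul]
  have hW'2 : W' * W'ᴴ = 1 := by
    rw [hW'def, conjTranspose_smul, Matrix.smul_mul, Matrix.mul_smul, smul_smul,
      hW.2, mul_comm, hzz, one_smul]
  clear_value W'
  set N' : Matrix m m ℂ := 1 + W' with hN'def
  have hdet : IsUnit N'.det := isUnit_iff_ne_zero.mpr hzdet
  clear_value N'
  have hNinv : N' * N'⁻¹ = 1 := mul_nonsing_inv _ hdet
  have hNinv' : N'⁻¹ * N' = 1 := nonsing_inv_mul _ hdet
  have hcomm : (1 - W') * N' = N' * (1 - W') := by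
    rw [hN'def]; noncomm_ring
  have hcomm' : N'⁻¹ * (1 - W') = (1 - W') * N'⁻¹ := by
    calc N'⁻¹ * (1 - W') = N'⁻¹ * (1 - W') * (N' * N'⁻¹) := by rw [hNinv, mul_one]
    _ = N'⁻¹ * ((1 - W') * N') * N'⁻¹ := by simp only [mul_assoc]
    _ = N'⁻¹ * (N' * (1 - W')) * N'⁻¹ := by rw [hcomm]
    _ = (N'⁻¹ * N') * ((1 - W') * N'⁻¹) := by simp only [mul_assoc]
    _ = (1 - W') * N'⁻¹ := by rw [hNinv', one_mul]
  set H : Matrix m m ℂ := Complex.I • ((1 - W') * N'⁻¹) with hHdef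
  clear_value H
  have hNconj : N'ᴴ = W'ᴴ * N' := by
    rw [hN'def, conjTranspose_add, conjTranspose_one, mul_add, mul_one, hW'1, add_comm]
  have hNconjinv : (N'ᴴ)⁻¹ = N'⁻¹ * W' := by
    apply inv_eq_right_inv
    rw [hNconj, mul_assoc, ← mul_assoc N', hNinv, one_mul, hW'1]
  have hH : Hᴴ = H := by
    rw [hHdef, conjTranspose_smul, conjTranspose_mul, conjTranspose_nonsing_inv]
    have h1 : (1 - W')ᴴ = W'ᴴ * (W' - 1) := by
      rw [conjTranspose_sub, conjTranspose_one, mul_sub, mul_one, hW'1]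
    rw [hNconjinv, h1]
    have h3 : N'⁻¹ * W' * (W'ᴴ * (W' - 1)) = N'⁻¹ * (W' - 1) := by
      rw [mul_assoc, ← mul_assoc W', hW'2, one_mul]
    rw [h3]
    have h2 : N'⁻¹ * (W' - 1) = -(N'⁻¹ * (1 - W')) := by
      rw [← mul_neg, neg_sub]
    rw [h2, hcomm']
    simp [Complex.star_def, smul_smul]
  -- the family `Am τ = i•1 + τ•H`
  set Am : ℝ → Matrix m m ℂ := fun τ => Complex.I • (1 : Matrix m m ℂ) + (τ : ℂ) • H
    with hAmdef
  clear_value Am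
  have hAmconj : ∀ τ : ℝ, (Am τ)ᴴ = -(Am (-τ)) := by
    intro τ
    simp only [hAmdef]
    simp only [conjTranspose_add, conjTranspose_smul, conjTranspose_one, hH,
      Complex.star_def, Complex.conj_I, Complex.conj_ofReal, Complex.ofReal_neg]
    module
  have key : ∀ σ τ : ℝ, Am σ * Am τ =
      (-1 : ℂ) • (1 : Matrix m m ℂ) + ((σ : ℂ) * (τ : ℂ)) • (H * H)
        + (Complex.I * ((σ : ℂ) + (τ : ℂ))) • H := by
    intro σ τ
    simp only [hAmdef]
    simp only [add_mul, mul_add, Matrix.smul_mul, Matrix.mul_smul, one_mul, mul_one,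
      smul_smul, Complex.I_mul_I]
    module
  have hAmmul : ∀ τ : ℝ, Am τ * Am (-τ) = Am (-τ) * Am τ := by
    intro τ
    rw [key, key]
    push_cast
    module
  have hprod : ∀ τ : ℝ, (Am τ)ᴴ * Am τ = 1 + ((τ : ℂ) * (τ : ℂ)) • (H * H) := by
    intro τ
    rw [hAmconj, neg_mul, key]
    push_cast
    module
  have hAmdet : ∀ τ : ℝ, IsUnit (Am τ).det := by
    intro τ
    have hpsd : (((τ : ℂ) * (τ : ℂ)) • (H * H)).PosSemidef := by
      have h2 : ((τ : ℂ) * (τ : ℂ)) • (H * H) = ((τ : ℂ) • H)ᴴ * ((τ : ℂ) • H) := by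
        rw [conjTranspose_smul, hH, Complex.star_def, Complex.conj_ofReal, Matrix.smul_mul,
          Matrix.mul_smul, smul_smul]
      rw [h2]
      exact posSemidef_conjTranspose_mul_self _
    have hpd : ((1 : Matrix m m ℂ) + ((τ : ℂ) * (τ : ℂ)) • (H * H)).PosDef :=
      Matrix.PosDef.add_posSemidef Matrix.PosDef.one hpsd
    have hdne : ((1 : Matrix m m ℂ) + ((τ : ℂ) * (τ : ℂ)) • (H * H)).det ≠ 0 :=
      hpd.det_pos.ne'
    rw [← hprod τ, det_mul, det_conjTranspose] at hdne
    exact isUnit_iff_ne_zero.mpr (mul_ne_zero_iff.mp hdne).2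
  have hneginv : ∀ τ : ℝ, (-(Am τ))⁻¹ = -((Am τ)⁻¹) := by
    intro τ
    exact inv_eq_right_inv (by rw [neg_mul_neg, mul_nonsing_inv _ (hAmdet τ)])
  have hinvcomm : ∀ τ : ℝ, (Am τ)⁻¹ * (Am (-τ))⁻¹ = (Am (-τ))⁻¹ * (Am τ)⁻¹ := by
    intro τ
    rw [← Matrix.mul_inv_rev, ← hAmmul, Matrix.mul_inv_rev]
  set f : ℝ → Matrix m m ℂ := fun τ => Am (-τ) * (Am τ)⁻¹ with hfdef
  clear_value f
  have hfconj : ∀ τ : ℝ, (f τ)ᴴ = (Am (-τ))⁻¹ * Am τ := by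
    intro τ
    simp only [hfdef]
    rw [conjTranspose_mul, conjTranspose_nonsing_inv, hAmconj τ, hAmconj (-τ), neg_neg,
      hneginv, neg_mul_neg]
  have hmem : ∀ τ : ℝ, f τ ∈ uSet m := by
    intro τ
    constructor
    · rw [hfconj]
      simp only [hfdef]
      calc (Am (-τ))⁻¹ * Am τ * (Am (-τ) * (Am τ)⁻¹)
          = (Am (-τ))⁻¹ * (Am τ * Am (-τ)) * (Am τ)⁻¹ := by simp only [mul_assoc]
        _ = (Am (-τ))⁻¹ * (Am (-τ) * Am τ) * (Am τ)⁻¹ := by rw [hAmmul]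
        _ = ((Am (-τ))⁻¹ * Am (-τ)) * (Am τ * (Am τ)⁻¹) := by simp only [mul_assoc]
        _ = 1 := by rw [nonsing_inv_mul _ (hAmdet (-τ)), mul_nonsing_inv _ (hAmdet τ), one_mul]
    · rw [hfconj]
      simp only [hfdef]
      calc Am (-τ) * (Am τ)⁻¹ * ((Am (-τ))⁻¹ * Am τ)
          = Am (-τ) * ((Am τ)⁻¹ * (Am (-τ))⁻¹) * Am τ := by simp only [mul_assoc]
        _ = Am (-τ) * ((Am (-τ))⁻¹ * (Am τ)⁻¹) * Am τ := by rw [hinvcomm]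
        _ = (Am (-τ) * (Am (-τ))⁻¹) * ((Am τ)⁻¹ * Am τ) := by simp only [mul_assoc]
        _ = 1 := by rw [mul_nonsing_inv _ (hAmdet (-τ)), nonsing_inv_mul _ (hAmdet τ), one_mul]
  have hf0 : f 0 = 1 := by
    simp only [hfdef, neg_zero]
    exact mul_nonsing_inv _ (hAmdet 0)
  have hN2 : N' + (1 - W') = (2 : ℂ) • (1 : Matrix m m ℂ) := by
    rw [hN'def]; module
  have hN2' : N' - (1 - W') = (2 : ℂ) • W' := by
    rw [hN'def]; module
  have hAm1 : Am 1 = (2 * Complex.I) • N'⁻¹ := by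
    simp only [hAmdef, Complex.ofReal_one, one_smul, hHdef]
    calc Complex.I • (1 : Matrix m m ℂ) + Complex.I • ((1 - W') * N'⁻¹)
        = Complex.I • (N' * N'⁻¹ + (1 - W') * N'⁻¹) := by rw [hNinv, smul_add]
      _ = Complex.I • ((N' + (1 - W')) * N'⁻¹) := by rw [← add_mul]
      _ = Complex.I • (((2 : ℂ) • (1 : Matrix m m ℂ)) * N'⁻¹) := by rw [hN2]
      _ = (2 * Complex.I) • N'⁻¹ := by
          rw [Matrix.smul_mul, one_mul, smul_smul, mul_comm]
  have hAm1' : Am (-1) = (2 * Complex.I) • (W' * N'⁻¹) := by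
    have h0 : Am (-1) = Complex.I • (1 : Matrix m m ℂ) - H := by
      simp only [hAmdef]
      push_cast
      module
    rw [h0, hHdef]
    calc Complex.I • (1 : Matrix m m ℂ) - Complex.I • ((1 - W') * N'⁻¹)
        = Complex.I • (N' * N'⁻¹ - (1 - W') * N'⁻¹) := by rw [hNinv, smul_sub]
      _ = Complex.I • ((N' - (1 - W')) * N'⁻¹) := by rw [← sub_mul]
      _ = Complex.I • (((2 : ℂ) • W') * N'⁻¹) := by rw [hN2']
      _ = (2 * Complex.I) • (W' * N'⁻¹) := by
          rw [Matrix.smul_mul, smul_smul, mul_comm]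
  have h2I : (2 * Complex.I) ≠ 0 := by
    simp [Complex.I_ne_zero]
  have hAm1inv : (Am 1)⁻¹ = (2 * Complex.I)⁻¹ • N' := by
    apply inv_eq_right_inv
    rw [hAm1, Matrix.smul_mul, Matrix.mul_smul, smul_smul, hNinv',
      mul_inv_cancel₀ h2I, one_smul]
  have hf1 : f 1 = W' := by
    simp only [hfdef]
    rw [hAm1', hAm1inv, Matrix.smul_mul, Matrix.mul_smul, smul_smul,
      mul_inv_cancel₀ h2I, one_smul, mul_assoc, hNinv', mul_one]
  have hAmcont : Continuous Am := by
    rw [hAmdef]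
    apply Continuous.add continuous_const
    exact Complex.continuous_ofReal.smul continuous_const
  have hfcont : Continuous f := by
    have h2 : f = fun τ => Am (-τ) * (((Am τ).det)⁻¹ • (Am τ).adjugate) := by
      funext τ
      simp only [hfdef]
      rw [Matrix.inv_def, Ring.inverse_eq_inv']
    rw [h2]
    refine Continuous.matrix_mul (hAmcont.comp continuous_neg) (Continuous.fun_smul ?_
      (Continuous.matrix_adjugate hAmcont))
    exact (Continuous.matrix_det hAmcont).inv₀ (fun τ => (hAmdet τ).ne_zero)
  have seg2 : JoinedIn (uSet m) 1 W' := by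
    have h := joinedIn_segment f hfcont (fun t _ _ => hmem t)
    rwa [hf0, hf1] at h
  -- phase path from W' to W
  set w : ℂ := (starRingEnd ℂ) z with hwdef
  have hwz : w * z = 1 := by rw [hwdef, ← Complex.star_def]; exact hzz
  have habsw : ‖w‖ = 1 := by rw [hwdef]; simpa using hz1
  have hexpw : Complex.exp ((w.arg : ℂ) * Complex.I) = w := by
    have h := Complex.norm_mul_exp_arg_mul_I w
    rwa [habsw, Complex.ofReal_one, one_mul] at h
  have hgscal : ∀ θ : ℝ, star (Complex.exp ((θ : ℂ) * Complex.I))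
      * Complex.exp ((θ : ℂ) * Complex.I) = 1 := by
    intro θ
    rw [Complex.star_def, ← Complex.exp_conj, ← Complex.exp_add, _root_.map_mul,
      Complex.conj_ofReal, Complex.conj_I]
    rw [show ((θ : ℂ) * -Complex.I + (θ : ℂ) * Complex.I) = 0 by ring, Complex.exp_zero]
  set g : ℝ → Matrix m m ℂ := fun τ => Complex.exp (((τ * w.arg : ℝ) : ℂ) * Complex.I) • W'
    with hgdef
  clear_value g
  have hgmem : ∀ τ : ℝ, g τ ∈ uSet m := by
    intro τ
    constructor
    · simp only [hgdef]
      rw [conjTranspose_smul, Matrix.smul_mul, Matrix.mul_smul, smul_smul, hW'1,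
        hgscal, one_smul]
    · simp only [hgdef]
      rw [conjTranspose_smul, Matrix.smul_mul, Matrix.mul_smul, smul_smul, hW'2,
        mul_comm, hgscal, one_smul]
  have hg0 : g 0 = W' := by
    simp only [hgdef]
    norm_num
  have hg1 : g 1 = W := by
    simp only [hgdef]
    rw [show ((1 * w.arg : ℝ) : ℂ) = (w.arg : ℂ) by norm_num, hexpw, hW'def, smul_smul,
      hwz, one_smul]
  have hgcont : Continuous g := by
    rw [hgdef]
    exact ((Complex.continuous_exp.comp ((Complex.continuous_ofReal.comp
      (continuous_id.mul continuous_const)).mul continuous_const)).smul continuous_const)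
  have seg1 : JoinedIn (uSet m) W' W := by
    have h := joinedIn_segment g hgcont (fun t _ _ => hgmem t)
    rwa [hg0, hg1] at h
  exact seg1.symm.trans seg2.symm


/-! ### Core lemmas in diagonalized coordinates -/

section Core

variable {k : ℕ}

/-- `ρ(x) = (1-x²)^{-1/2}` on `(-1,1)`, `0` outside. -/
def rho (x : ℝ) : ℝ := if x ^ 2 < 1 then (Real.sqrt (1 - x ^ 2))⁻¹ else 0

lemma sq_eq_one_cases {x : ℝ} (h : x ^ 2 = 1) : x = 1 ∨ x = -1 := by
  have h2 : (x - 1) * (x + 1) = 0 := by nlinarith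
  rcases mul_eq_zero.mp h2 with h3 | h3
  · left; linarith
  · right; linarith

lemma rho_eq_zero {x : ℝ} (h : x = 1 ∨ x = -1) : rho x = 0 := by
  rw [rho, if_neg]
  rcases h with h | h <;> rw [h] <;> norm_num

lemma rho_mul_self_mul {x : ℝ} (hx : x ^ 2 < 1) : rho x * rho x * (1 - x ^ 2) = 1 := by
  rw [rho, if_pos hx]
  have h1 : (0 : ℝ) < 1 - x ^ 2 := by linarith
  have h2 : Real.sqrt (1 - x ^ 2) ≠ 0 := by positivity
  rw [show (Real.sqrt (1 - x^2))⁻¹ * (Real.sqrt (1-x^2))⁻¹ * (1 - x^2)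
      = (1 - x^2) / (Real.sqrt (1-x^2) * Real.sqrt (1-x^2)) by ring,
    Real.mul_self_sqrt h1.le]
  field_simp

lemma sqrt_one_sub_sq_mul_rho {x : ℝ} (hx : x ^ 2 ≤ 1) :
    Real.sqrt (1 - x ^ 2) * rho x = if x ^ 2 < 1 then 1 else 0 := by
  rcases lt_or_ge (x ^ 2) 1 with h | h
  · rw [rho, if_pos h, if_pos h]
    have h1 : (0 : ℝ) < 1 - x ^ 2 := by linarith
    have h2 : Real.sqrt (1 - x ^ 2) ≠ 0 := by positivity
    field_simp
  · have h1 : x ^ 2 = 1 := le_antisymm hx h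
    rw [rho, if_neg (by linarith), if_neg (by linarith), mul_zero]

/-- conjTranspose of a real diagonal matrix -/
lemma diag_real_conjTranspose (f : Fin k → ℝ) :
    (Matrix.diagonal (fun i => ((f i : ℝ) : ℂ)))ᴴ
      = Matrix.diagonal (fun i => ((f i : ℝ) : ℂ)) := by
  rw [Matrix.diagonal_conjTranspose]
  have h : (star fun i => ((f i : ℝ) : ℂ)) = fun i => ((f i : ℝ) : ℂ) := by
    funext i
    exact Complex.conj_ofReal (f i)
  rw [h]

lemma row_sum {lam : Fin k → ℝ} {M : Matrix (Fin k) (Fin k) ℂ}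
    (hM2 : M * Mᴴ = Matrix.diagonal (fun i => ((1 - (lam i) ^ 2 : ℝ) : ℂ))) :
    ∀ i, ∑ j, Complex.normSq (M i j) = 1 - (lam i) ^ 2 := by
  intro i
  have h := Matrix.ext_iff.mpr hM2 i i
  rw [Matrix.mul_apply, Matrix.diagonal_apply_eq] at h
  have h2 : ∑ j, M i j * (Mᴴ) j i = ((∑ j, Complex.normSq (M i j) : ℝ) : ℂ) := by
    push_cast
    apply Finset.sum_congr rfl
    intro j _
    rw [Matrix.conjTranspose_apply, Complex.star_def, Complex.mul_conj]
  rw [h2] at h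
  exact_mod_cast h

lemma col_sum {mu : Fin k → ℝ} {M : Matrix (Fin k) (Fin k) ℂ}
    (hM3 : Mᴴ * M = Matrix.diagonal (fun j => ((1 - (mu j) ^ 2 : ℝ) : ℂ))) :
    ∀ j, ∑ i, Complex.normSq (M i j) = 1 - (mu j) ^ 2 := by
  intro j
  have h := Matrix.ext_iff.mpr hM3 j j
  rw [Matrix.mul_apply, Matrix.diagonal_apply_eq] at h
  have h2 : ∑ i, (Mᴴ) j i * M i j = ((∑ i, Complex.normSq (M i j) : ℝ) : ℂ) := by
    push_cast
    apply Finset.sum_congr rfl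
    intro i _
    rw [Matrix.conjTranspose_apply, Complex.star_def, mul_comm, Complex.mul_conj]
  rw [h2] at h
  exact_mod_cast h

lemma lam_sq_le {lam : Fin k → ℝ} {M : Matrix (Fin k) (Fin k) ℂ}
    (hM2 : M * Mᴴ = Matrix.diagonal (fun i => ((1 - (lam i) ^ 2 : ℝ) : ℂ))) :
    ∀ i, (lam i) ^ 2 ≤ 1 := by
  intro i
  have h := row_sum hM2 i
  have h2 : 0 ≤ ∑ j, Complex.normSq (M i j) :=
    Finset.sum_nonneg fun j _ => Complex.normSq_nonneg _
  linarith

lemma mu_sq_le {mu : Fin k → ℝ} {M : Matrix (Fin k) (Fin k) ℂ}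
    (hM3 : Mᴴ * M = Matrix.diagonal (fun j => ((1 - (mu j) ^ 2 : ℝ) : ℂ))) :
    ∀ j, (mu j) ^ 2 ≤ 1 := by
  intro j
  have h := col_sum hM3 j
  have h2 : 0 ≤ ∑ i, Complex.normSq (M i j) :=
    Finset.sum_nonneg fun i _ => Complex.normSq_nonneg _
  linarith

lemma row_zero {lam : Fin k → ℝ} {M : Matrix (Fin k) (Fin k) ℂ}
    (hM2 : M * Mᴴ = Matrix.diagonal (fun i => ((1 - (lam i) ^ 2 : ℝ) : ℂ)))
    {i} (hi : (lam i) ^ 2 = 1) : ∀ j, M i j = 0 := by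
  intro j
  have h := row_sum hM2 i
  rw [hi, sub_self] at h
  have h2 := (Finset.sum_eq_zero_iff_of_nonneg
    (fun j _ => Complex.normSq_nonneg (M i j))).mp h j (Finset.mem_univ j)
  exact Complex.normSq_eq_zero.mp h2

lemma col_zero {mu : Fin k → ℝ} {M : Matrix (Fin k) (Fin k) ℂ}
    (hM3 : Mᴴ * M = Matrix.diagonal (fun j => ((1 - (mu j) ^ 2 : ℝ) : ℂ)))
    {j} (hj : (mu j) ^ 2 = 1) : ∀ i, M i j = 0 := by
  intro i
  have h := col_sum hM3 j
  rw [hj, sub_self] at h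
  have h2 := (Finset.sum_eq_zero_iff_of_nonneg
    (fun i _ => Complex.normSq_nonneg (M i j))).mp h i (Finset.mem_univ i)
  exact Complex.normSq_eq_zero.mp h2

/-- transfer of a function of the eigenvalues through `M` -/
lemma sum_fun_eq {lam mu : Fin k → ℝ} {M : Matrix (Fin k) (Fin k) ℂ}
    (hMeig : ∀ i j, M i j ≠ 0 → lam i = mu j)
    (hM2 : M * Mᴴ = Matrix.diagonal (fun i => ((1 - (lam i) ^ 2 : ℝ) : ℂ)))
    (hM3 : Mᴴ * M = Matrix.diagonal (fun j => ((1 - (mu j) ^ 2 : ℝ) : ℂ)))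
    (g : ℝ → ℝ) (hg1 : g 1 = 0) (hg2 : g (-1) = 0) :
    ∑ i, g (lam i) = ∑ j, g (mu j) := by
  classical
  set f : ℝ → ℝ := fun x => if x ^ 2 < 1 then g x / (1 - x ^ 2) else 0 with hfdef
  have step1 : ∀ x : ℝ, x ^ 2 ≤ 1 → f x * (1 - x ^ 2) = g x := by
    intro x hx
    simp only [hfdef]
    by_cases h : x ^ 2 < 1
    · rw [if_pos h]
      have : (1 : ℝ) - x ^ 2 ≠ 0 := by intro h0; rw [sub_eq_zero] at h0; linarith
      field_simp
    · rw [if_neg h]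
      have hx1 : x ^ 2 = 1 := le_antisymm hx (not_lt.1 h)
      rcases sq_eq_one_cases hx1 with h2 | h2 <;> rw [h2] <;> simp [hg1, hg2]
  calc ∑ i, g (lam i) = ∑ i, f (lam i) * (1 - (lam i) ^ 2) := by
        refine Finset.sum_congr rfl fun i _ => ?_
        rw [step1 _ (lam_sq_le hM2 i)]
    _ = ∑ i, f (lam i) * (∑ j, Complex.normSq (M i j)) := by
        refine Finset.sum_congr rfl fun i _ => ?_
        rw [row_sum hM2 i]
    _ = ∑ i, ∑ j, f (lam i) * Complex.normSq (M i j) := by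
        refine Finset.sum_congr rfl fun i _ => ?_
        rw [Finset.mul_sum]
    _ = ∑ i, ∑ j, f (mu j) * Complex.normSq (M i j) := by
        refine Finset.sum_congr rfl fun i _ => Finset.sum_congr rfl fun j _ => ?_
        by_cases h : M i j = 0
        · rw [h]; simp
        · rw [hMeig i j h]
    _ = ∑ j, ∑ i, f (mu j) * Complex.normSq (M i j) := Finset.sum_comm
    _ = ∑ j, f (mu j) * (1 - (mu j) ^ 2) := by
        refine Finset.sum_congr rfl fun j _ => ?_
        rw [← Finset.mul_sum, col_sum hM3 j]
    _ = ∑ j, g (mu j) := by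
        refine Finset.sum_congr rfl fun j _ => ?_
        rw [step1 _ (mu_sq_le hM3 j)]

/-- equality of the sizes of the `±1` eigenvalue sets -/
lemma card_pm_eq {lam mu : Fin k → ℝ} {M : Matrix (Fin k) (Fin k) ℂ}
    (hMeig : ∀ i j, M i j ≠ 0 → lam i = mu j)
    (hM2 : M * Mᴴ = Matrix.diagonal (fun i => ((1 - (lam i) ^ 2 : ℝ) : ℂ)))
    (hM3 : Mᴴ * M = Matrix.diagonal (fun j => ((1 - (mu j) ^ 2 : ℝ) : ℂ)))
    (hsum : ∑ i, lam i = ∑ j, mu j) :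
    Fintype.card {i // lam i = 1} = Fintype.card {j // mu j = 1} ∧
      Fintype.card {i // lam i = -1} = Fintype.card {j // mu j = -1} := by
  classical
  -- indicator counting
  have hcount : ∀ w : Fin k → ℝ,
      (Fintype.card {i // w i = 1} : ℝ) = ∑ i, (if w i = 1 then (1:ℝ) else 0) := by
    intro w
    rw [Finset.sum_boole, Fintype.card_subtype]
  have hcount' : ∀ w : Fin k → ℝ,
      (Fintype.card {i // w i = -1} : ℝ) = ∑ i, (if w i = -1 then (1:ℝ) else 0) := by
    intro w
    rw [Finset.sum_boole, Fintype.card_subtype]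
  set gA : ℝ → ℝ := fun x => 1 - (if x = 1 then (1:ℝ) else 0) - (if x = -1 then (1:ℝ) else 0)
    with hgA
  set gB : ℝ → ℝ := fun x => x - (if x = 1 then (1:ℝ) else 0) + (if x = -1 then (1:ℝ) else 0)
    with hgB
  have hA := sum_fun_eq hMeig hM2 hM3 gA (by norm_num [hgA]) (by norm_num [hgA])
  have hB := sum_fun_eq hMeig hM2 hM3 gB (by norm_num [hgB]) (by norm_num [hgB])
  simp only [hgA] at hA
  simp only [hgB] at hB
  simp only [Finset.sum_sub_distrib, Finset.sum_add_distrib] at hA hB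
  rw [← hcount lam, ← hcount mu, ← hcount' lam, ← hcount' mu] at hA hB
  have hc1 : (Fintype.card {i // lam i = 1} : ℝ) = Fintype.card {j // mu j = 1} := by
    linarith [hsum]
  have hc2 : (Fintype.card {i // lam i = -1} : ℝ) = Fintype.card {j // mu j = -1} := by
    linarith [hsum]
  exact ⟨by exact_mod_cast hc1, by exact_mod_cast hc2⟩

end Core


section OmegaSection

variable {k : ℕ}

lemma diagonal_congr {f g : Fin k → ℂ} (h : ∀ i, f i = g i) :
    Matrix.diagonal f = Matrix.diagonal g := by
  rw [funext h]

/-- the partial matching matrix -/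
def Emat (eps : Fin k → Option (Fin k)) : Matrix (Fin k) (Fin k) ℂ :=
  Matrix.of fun i j => if eps i = some j then 1 else 0

lemma Emat_apply (eps : Fin k → Option (Fin k)) (i j : Fin k) :
    Emat eps i j = if eps i = some j then 1 else 0 := rfl

/-- the unitary relating the two diagonalizations -/
def Omega (lam : Fin k → ℝ) (M : Matrix (Fin k) (Fin k) ℂ)
    (eps : Fin k → Option (Fin k)) : Matrix (Fin k) (Fin k) ℂ :=
  Matrix.diagonal (fun i => ((rho (lam i) : ℝ) : ℂ)) * M + Emat eps

variable {lam mu : Fin k → ℝ} {M : Matrix (Fin k) (Fin k) ℂ}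
  {eps : Fin k → Option (Fin k)}

lemma M_mul_Ematconj (hM3 : Mᴴ * M = Matrix.diagonal (fun j => ((1 - (mu j) ^ 2 : ℝ) : ℂ)))
    (p1 : ∀ i j, eps i = some j → (lam i = 1 ∧ mu j = 1) ∨ (lam i = -1 ∧ mu j = -1)) :
    M * (Emat eps)ᴴ = 0 := by
  classical
  ext i i'
  rw [Matrix.mul_apply, Matrix.zero_apply]
  apply Finset.sum_eq_zero
  intro j _
  rw [Matrix.conjTranspose_apply, Emat_apply]
  by_cases h : eps i' = some j
  · have hmu : (mu j) ^ 2 = 1 := by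
      rcases p1 i' j h with ⟨_, h2⟩ | ⟨_, h2⟩ <;> rw [h2] <;> norm_num
    rw [col_zero hM3 hmu i, zero_mul]
  · rw [if_neg h, star_zero, mul_zero]

lemma Emat_mul_Mconj (hM3 : Mᴴ * M = Matrix.diagonal (fun j => ((1 - (mu j) ^ 2 : ℝ) : ℂ)))
    (p1 : ∀ i j, eps i = some j → (lam i = 1 ∧ mu j = 1) ∨ (lam i = -1 ∧ mu j = -1)) :
    Emat eps * Mᴴ = 0 := by
  have h := congrArg Matrix.conjTranspose (M_mul_Ematconj hM3 p1)
  rwa [Matrix.conjTranspose_mul, Matrix.conjTranspose_conjTranspose,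
    Matrix.conjTranspose_zero] at h

lemma Emat_mul_conj_self
    (p1 : ∀ i j, eps i = some j → (lam i = 1 ∧ mu j = 1) ∨ (lam i = -1 ∧ mu j = -1))
    (p2 : ∀ i, (lam i = 1 ∨ lam i = -1) → (eps i).isSome)
    (p4 : ∀ i i' j, eps i = some j → eps i' = some j → i = i') :
    Emat eps * (Emat eps)ᴴ
      = Matrix.diagonal (fun i => if lam i = 1 ∨ lam i = -1 then (1 : ℂ) else 0) := by
  classical
  ext i i'
  rw [Matrix.mul_apply]
  rcases h : eps i with _ | j₀
  · have hE0 : ∀ j, Emat eps i j = 0 := by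
      intro j
      rw [Emat_apply, if_neg (by rw [h]; simp)]
    rw [Finset.sum_eq_zero (fun j _ => by rw [hE0 j, zero_mul])]
    by_cases hii : i = i'
    · subst hii
      rw [Matrix.diagonal_apply_eq, if_neg]
      intro hlam
      have h2 := p2 i hlam
      rw [h] at h2
      simp at h2
    · rw [Matrix.diagonal_apply_ne _ hii]
  · rw [Finset.sum_eq_single j₀]
    · rw [Matrix.conjTranspose_apply, Emat_apply, Emat_apply, if_pos h]
      by_cases hii : i = i'
      · subst hii
        rw [if_pos h, Matrix.diagonal_apply_eq, if_pos]
        · simp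
        · rcases p1 i j₀ h with ⟨h2, _⟩ | ⟨h2, _⟩
          · exact Or.inl h2
          · exact Or.inr h2
      · rw [if_neg (fun h' => hii (p4 i i' j₀ h h')), Matrix.diagonal_apply_ne _ hii,
          star_zero, mul_zero]
    · intro j _ hj
      rw [Emat_apply, if_neg (by rw [h]; simpa using (Ne.symm hj)), zero_mul]
    · intro hmem
      exact absurd (Finset.mem_univ j₀) hmem

lemma Ematconj_mul_self
    (p1 : ∀ i j, eps i = some j → (lam i = 1 ∧ mu j = 1) ∨ (lam i = -1 ∧ mu j = -1))
    (p3 : ∀ j, (mu j = 1 ∨ mu j = -1) → ∃ i, eps i = some j)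
    (p4 : ∀ i i' j, eps i = some j → eps i' = some j → i = i') :
    (Emat eps)ᴴ * Emat eps
      = Matrix.diagonal (fun j => if mu j = 1 ∨ mu j = -1 then (1 : ℂ) else 0) := by
  classical
  ext j j'
  rw [Matrix.mul_apply]
  by_cases hj : mu j = 1 ∨ mu j = -1
  · obtain ⟨i₀, hi₀⟩ := p3 j hj
    rw [Finset.sum_eq_single i₀]
    · rw [Matrix.conjTranspose_apply, Emat_apply, if_pos hi₀, star_one, one_mul,
        Emat_apply]
      by_cases hjj : j = j'
      · subst hjj
        rw [if_pos hi₀, Matrix.diagonal_apply_eq, if_pos hj]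
      · rw [if_neg (by rw [hi₀]; simpa using hjj), Matrix.diagonal_apply_ne _ hjj]
    · intro i _ hi
      rw [Matrix.conjTranspose_apply, Emat_apply, if_neg
        (fun h' => hi (p4 i i₀ j h' hi₀)), star_zero, zero_mul]
    · intro hmem
      exact absurd (Finset.mem_univ i₀) hmem
  · rw [Finset.sum_eq_zero]
    · by_cases hjj : j = j'
      · subst hjj
        rw [Matrix.diagonal_apply_eq, if_neg hj]
      · rw [Matrix.diagonal_apply_ne _ hjj]
    · intro i _
      rw [Matrix.conjTranspose_apply, Emat_apply]
      by_cases h : eps i = some j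
      · exfalso
        rcases p1 i j h with ⟨_, h2⟩ | ⟨_, h2⟩
        · exact hj (Or.inl h2)
        · exact hj (Or.inr h2)
      · rw [if_neg h, star_zero, zero_mul]

lemma diag_comm_Emat
    (p1 : ∀ i j, eps i = some j → (lam i = 1 ∧ mu j = 1) ∨ (lam i = -1 ∧ mu j = -1))
    (g : ℝ → ℝ) :
    Matrix.diagonal (fun i => ((g (lam i) : ℝ) : ℂ)) * Emat eps
      = Emat eps * Matrix.diagonal (fun j => ((g (mu j) : ℝ) : ℂ)) := by
  classical
  ext i j
  rw [Matrix.diagonal_mul, Matrix.mul_diagonal]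
  by_cases h : eps i = some j
  · have hlm : lam i = mu j := by
      rcases p1 i j h with ⟨h2, h3⟩ | ⟨h2, h3⟩ <;> rw [h2, h3]
    rw [hlm, mul_comm]
  · rw [show Emat eps i j = 0 by rw [Emat_apply, if_neg h], mul_zero, zero_mul]

lemma diag_comm_M (hMeig : ∀ i j, M i j ≠ 0 → lam i = mu j) (g : ℝ → ℝ) :
    Matrix.diagonal (fun i => ((g (lam i) : ℝ) : ℂ)) * M
      = M * Matrix.diagonal (fun j => ((g (mu j) : ℝ) : ℂ)) := by
  classical
  ext i j
  rw [Matrix.diagonal_mul, Matrix.mul_diagonal]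
  by_cases h : M i j = 0
  · rw [h, mul_zero, zero_mul]
  · rw [hMeig i j h, mul_comm]

lemma diag_rho_mul_Emat
    (p1 : ∀ i j, eps i = some j → (lam i = 1 ∧ mu j = 1) ∨ (lam i = -1 ∧ mu j = -1)) :
    Matrix.diagonal (fun i => ((rho (lam i) : ℝ) : ℂ)) * Emat eps = 0 := by
  classical
  ext i j
  rw [Matrix.diagonal_mul, Matrix.zero_apply]
  by_cases h : eps i = some j
  · have hlam : lam i = 1 ∨ lam i = -1 := by
      rcases p1 i j h with ⟨h2, _⟩ | ⟨h2, _⟩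
      · exact Or.inl h2
      · exact Or.inr h2
    rw [rho_eq_zero hlam]
    norm_num
  · rw [show Emat eps i j = 0 by rw [Emat_apply, if_neg h], mul_zero]

lemma diag_comm_Omega (hMeig : ∀ i j, M i j ≠ 0 → lam i = mu j)
    (p1 : ∀ i j, eps i = some j → (lam i = 1 ∧ mu j = 1) ∨ (lam i = -1 ∧ mu j = -1))
    (g : ℝ → ℝ) :
    Matrix.diagonal (fun i => ((g (lam i) : ℝ) : ℂ)) * Omega lam M eps
      = Omega lam M eps * Matrix.diagonal (fun j => ((g (mu j) : ℝ) : ℂ)) := by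
  rw [Omega, mul_add, add_mul, diag_comm_Emat p1 g]
  congr 1
  calc Matrix.diagonal (fun i => ((g (lam i) : ℝ) : ℂ))
        * (Matrix.diagonal (fun i => ((rho (lam i) : ℝ) : ℂ)) * M)
      = (Matrix.diagonal (fun i => ((g (lam i) : ℝ) : ℂ))
        * Matrix.diagonal (fun i => ((rho (lam i) : ℝ) : ℂ))) * M := by rw [mul_assoc]
    _ = (Matrix.diagonal (fun i => ((rho (lam i) : ℝ) : ℂ))
        * Matrix.diagonal (fun i => ((g (lam i) : ℝ) : ℂ))) * M := by
        rw [Matrix.diagonal_mul_diagonal, Matrix.diagonal_mul_diagonal]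
        refine congrArg (· * M) (diagonal_congr fun i => ?_)
        ring
    _ = Matrix.diagonal (fun i => ((rho (lam i) : ℝ) : ℂ))
        * (Matrix.diagonal (fun i => ((g (lam i) : ℝ) : ℂ)) * M) := by rw [mul_assoc]
    _ = Matrix.diagonal (fun i => ((rho (lam i) : ℝ) : ℂ))
        * (M * Matrix.diagonal (fun j => ((g (mu j) : ℝ) : ℂ))) := by rw [diag_comm_M hMeig]
    _ = Matrix.diagonal (fun i => ((rho (lam i) : ℝ) : ℂ)) * M
        * Matrix.diagonal (fun j => ((g (mu j) : ℝ) : ℂ)) := by rw [mul_assoc]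

lemma Omega_mul_conj (hMeig : ∀ i j, M i j ≠ 0 → lam i = mu j)
    (hM2 : M * Mᴴ = Matrix.diagonal (fun i => ((1 - (lam i) ^ 2 : ℝ) : ℂ)))
    (hM3 : Mᴴ * M = Matrix.diagonal (fun j => ((1 - (mu j) ^ 2 : ℝ) : ℂ)))
    (p1 : ∀ i j, eps i = some j → (lam i = 1 ∧ mu j = 1) ∨ (lam i = -1 ∧ mu j = -1))
    (p2 : ∀ i, (lam i = 1 ∨ lam i = -1) → (eps i).isSome)
    (p4 : ∀ i i' j, eps i = some j → eps i' = some j → i = i') :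
    Omega lam M eps * (Omega lam M eps)ᴴ = 1 := by
  classical
  rw [Omega, conjTranspose_add, conjTranspose_mul, diag_real_conjTranspose]
  rw [mul_add, add_mul, add_mul]
  have hT2 : Matrix.diagonal (fun i => ((rho (lam i) : ℝ) : ℂ)) * M * (Emat eps)ᴴ = 0 := by
    rw [mul_assoc, M_mul_Ematconj hM3 p1, mul_zero]
  have hT3 : Emat eps * (Mᴴ * Matrix.diagonal (fun i => ((rho (lam i) : ℝ) : ℂ))) = 0 := by
    rw [← mul_assoc, Emat_mul_Mconj hM3 p1, zero_mul]
  rw [hT2, hT3, Emat_mul_conj_self p1 p2 p4]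
  have hT1 : Matrix.diagonal (fun i => ((rho (lam i) : ℝ) : ℂ)) * M
      * (Mᴴ * Matrix.diagonal (fun i => ((rho (lam i) : ℝ) : ℂ)))
      = Matrix.diagonal (fun i => if (lam i) ^ 2 < 1 then (1 : ℂ) else 0) := by
    calc Matrix.diagonal (fun i => ((rho (lam i) : ℝ) : ℂ)) * M
        * (Mᴴ * Matrix.diagonal (fun i => ((rho (lam i) : ℝ) : ℂ)))
        = Matrix.diagonal (fun i => ((rho (lam i) : ℝ) : ℂ)) * (M * Mᴴ)
          * Matrix.diagonal (fun i => ((rho (lam i) : ℝ) : ℂ)) := by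
          simp only [mul_assoc]
      _ = Matrix.diagonal (fun i => ((rho (lam i) : ℝ) : ℂ))
          * Matrix.diagonal (fun i => ((1 - (lam i) ^ 2 : ℝ) : ℂ))
          * Matrix.diagonal (fun i => ((rho (lam i) : ℝ) : ℂ)) := by rw [hM2]
      _ = Matrix.diagonal (fun i => if (lam i) ^ 2 < 1 then (1 : ℂ) else 0) := by
          rw [Matrix.diagonal_mul_diagonal, Matrix.diagonal_mul_diagonal]
          refine diagonal_congr fun i => ?_
          by_cases h : (lam i) ^ 2 < 1
          · rw [if_pos h]
            have h2 := rho_mul_self_mul h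
            rw [show ((rho (lam i) : ℝ) : ℂ) * ((1 - (lam i) ^ 2 : ℝ) : ℂ)
                * ((rho (lam i) : ℝ) : ℂ)
                = ((rho (lam i) * rho (lam i) * (1 - (lam i) ^ 2) : ℝ) : ℂ) by
                push_cast; ring,
              h2, Complex.ofReal_one]
          · rw [if_neg h]
            have h1 : (lam i) ^ 2 = 1 := le_antisymm (lam_sq_le hM2 i) (not_lt.1 h)
            rw [rho_eq_zero (sq_eq_one_cases h1)]
            norm_num
  rw [hT1, add_zero, zero_add, Matrix.diagonal_add, show (1 : Matrix (Fin k) (Fin k) ℂ)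
    = Matrix.diagonal (fun _ => 1) from Matrix.diagonal_one.symm]
  refine diagonal_congr fun i => ?_
  by_cases h : (lam i) ^ 2 < 1
  · rw [if_pos h, if_neg, add_zero]
    intro hlam
    rcases hlam with h2 | h2 <;> rw [h2] at h <;> norm_num at h
  · have h1 : (lam i) ^ 2 = 1 := le_antisymm (lam_sq_le hM2 i) (not_lt.1 h)
    rw [if_neg h, if_pos (sq_eq_one_cases h1), zero_add]

lemma Omegaconj_mul (hMeig : ∀ i j, M i j ≠ 0 → lam i = mu j)
    (hM2 : M * Mᴴ = Matrix.diagonal (fun i => ((1 - (lam i) ^ 2 : ℝ) : ℂ)))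
    (hM3 : Mᴴ * M = Matrix.diagonal (fun j => ((1 - (mu j) ^ 2 : ℝ) : ℂ)))
    (p1 : ∀ i j, eps i = some j → (lam i = 1 ∧ mu j = 1) ∨ (lam i = -1 ∧ mu j = -1))
    (p3 : ∀ j, (mu j = 1 ∨ mu j = -1) → ∃ i, eps i = some j)
    (p4 : ∀ i i' j, eps i = some j → eps i' = some j → i = i') :
    (Omega lam M eps)ᴴ * Omega lam M eps = 1 := by
  classical
  rw [Omega, conjTranspose_add, conjTranspose_mul, diag_real_conjTranspose]
  rw [mul_add, add_mul, add_mul]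
  have hT2 : Mᴴ * Matrix.diagonal (fun i => ((rho (lam i) : ℝ) : ℂ))
      * (Matrix.diagonal (fun i => ((rho (lam i) : ℝ) : ℂ)) * M)
      = Matrix.diagonal (fun j => if (mu j) ^ 2 < 1 then (1 : ℂ) else 0) := by
    have hδ : Matrix.diagonal (fun i => ((rho (lam i) : ℝ) : ℂ))
        * (Matrix.diagonal (fun i => ((rho (lam i) : ℝ) : ℂ)) * M)
        = M * Matrix.diagonal (fun j => (((fun x => rho x * rho x) (mu j) : ℝ) : ℂ)) := by
      rw [← mul_assoc, Matrix.diagonal_mul_diagonal]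
      rw [show (fun i => ((rho (lam i) : ℝ) : ℂ) * ((rho (lam i) : ℝ) : ℂ))
          = fun i => (((fun x => rho x * rho x) (lam i) : ℝ) : ℂ) by
          funext i; push_cast; ring]
      rw [diag_comm_M hMeig (fun x => rho x * rho x)]
    calc Mᴴ * Matrix.diagonal (fun i => ((rho (lam i) : ℝ) : ℂ))
        * (Matrix.diagonal (fun i => ((rho (lam i) : ℝ) : ℂ)) * M)
        = Mᴴ * (Matrix.diagonal (fun i => ((rho (lam i) : ℝ) : ℂ))
          * (Matrix.diagonal (fun i => ((rho (lam i) : ℝ) : ℂ)) * M)) := by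
          simp only [mul_assoc]
      _ = Mᴴ * (M * Matrix.diagonal (fun j => (((fun x => rho x * rho x) (mu j) : ℝ) : ℂ))) := by
          rw [hδ]
      _ = Mᴴ * M * Matrix.diagonal (fun j => (((fun x => rho x * rho x) (mu j) : ℝ) : ℂ)) := by
          rw [mul_assoc]
      _ = Matrix.diagonal (fun j => ((1 - (mu j) ^ 2 : ℝ) : ℂ))
          * Matrix.diagonal (fun j => (((fun x => rho x * rho x) (mu j) : ℝ) : ℂ)) := by
          rw [hM3]
      _ = Matrix.diagonal (fun j => if (mu j) ^ 2 < 1 then (1 : ℂ) else 0) := by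
          rw [Matrix.diagonal_mul_diagonal]
          refine diagonal_congr fun j => ?_
          by_cases h : (mu j) ^ 2 < 1
          · rw [if_pos h]
            have h2 := rho_mul_self_mul h
            rw [show ((1 - (mu j) ^ 2 : ℝ) : ℂ) * (((fun x => rho x * rho x) (mu j) : ℝ) : ℂ)
                = ((rho (mu j) * rho (mu j) * (1 - (mu j) ^ 2) : ℝ) : ℂ) by push_cast; ring,
              h2, Complex.ofReal_one]
          · have h1 : (mu j) ^ 2 = 1 := le_antisymm (mu_sq_le hM3 j) (not_lt.1 h)
            have h2 : rho (mu j) = 0 := rho_eq_zero (sq_eq_one_cases h1)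
            rw [if_neg h]
            simp [h2]
  have hT3 : Mᴴ * Matrix.diagonal (fun i => ((rho (lam i) : ℝ) : ℂ)) * Emat eps = 0 := by
    rw [mul_assoc, diag_rho_mul_Emat p1, mul_zero]
  have hT4 : (Emat eps)ᴴ * (Matrix.diagonal (fun i => ((rho (lam i) : ℝ) : ℂ)) * M) = 0 := by
    have h2 : (Emat eps)ᴴ * Matrix.diagonal (fun i => ((rho (lam i) : ℝ) : ℂ)) = 0 := by
      have h3 := congrArg Matrix.conjTranspose (diag_rho_mul_Emat (lam := lam) (mu := mu) p1)
      rwa [Matrix.conjTranspose_mul, diag_real_conjTranspose, Matrix.conjTranspose_zero] at h3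
    rw [← mul_assoc, h2, zero_mul]
  rw [hT2, hT3, hT4, Ematconj_mul_self p1 p3 p4, add_zero, zero_add, Matrix.diagonal_add,
    show (1 : Matrix (Fin k) (Fin k) ℂ) = Matrix.diagonal (fun _ => 1) from
      Matrix.diagonal_one.symm]
  refine diagonal_congr fun j => ?_
  by_cases h : (mu j) ^ 2 < 1
  · rw [if_pos h, if_neg, add_zero]
    intro hmu
    rcases hmu with h2 | h2 <;> rw [h2] at h <;> norm_num at h
  · have h1 : (mu j) ^ 2 = 1 := le_antisymm (mu_sq_le hM3 j) (not_lt.1 h)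
    rw [if_neg h, if_pos (sq_eq_one_cases h1), zero_add]

lemma diag_sqrt_mul_Omega
    (hM2 : M * Mᴴ = Matrix.diagonal (fun i => ((1 - (lam i) ^ 2 : ℝ) : ℂ)))
    (p1 : ∀ i j, eps i = some j → (lam i = 1 ∧ mu j = 1) ∨ (lam i = -1 ∧ mu j = -1)) :
    Matrix.diagonal (fun i => ((Real.sqrt (1 - (lam i) ^ 2) : ℝ) : ℂ)) * Omega lam M eps
      = M := by
  classical
  rw [Omega, mul_add]
  have hE : Matrix.diagonal (fun i => ((Real.sqrt (1 - (lam i) ^ 2) : ℝ) : ℂ)) * Emat eps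
      = 0 := by
    ext i j
    rw [Matrix.diagonal_mul, Matrix.zero_apply]
    by_cases h : eps i = some j
    · have hlam : (lam i) ^ 2 = 1 := by
        rcases p1 i j h with ⟨h2, _⟩ | ⟨h2, _⟩ <;> rw [h2] <;> norm_num
      rw [hlam]
      norm_num
    · rw [show Emat eps i j = 0 by rw [Emat_apply, if_neg h], mul_zero]
  rw [hE, add_zero, ← mul_assoc, Matrix.diagonal_mul_diagonal]
  ext i j
  rw [Matrix.diagonal_mul]
  rw [show ((Real.sqrt (1 - (lam i) ^ 2) : ℝ) : ℂ) * ((rho (lam i) : ℝ) : ℂ)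
      = ((Real.sqrt (1 - (lam i) ^ 2) * rho (lam i) : ℝ) : ℂ) by push_cast; ring,
    sqrt_one_sub_sq_mul_rho (lam_sq_le hM2 i)]
  by_cases h : (lam i) ^ 2 < 1
  · rw [if_pos h, Complex.ofReal_one, one_mul]
  · have h1 : (lam i) ^ 2 = 1 := le_antisymm (lam_sq_le hM2 i) (not_lt.1 h)
    rw [if_neg h, Complex.ofReal_zero, zero_mul, row_zero hM2 h1 j]

end OmegaSection


section Main

variable {k : ℕ}

/-- the target set: projections with two-valued diagonal, in block coordinates -/
def Sset (k : ℕ) (γ : ℝ) : Set (Matrix (Fin k ⊕ Fin k) (Fin k ⊕ Fin k) ℂ) :=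
  {q | q * q = q ∧ qᴴ = q ∧ (∀ i, q (Sum.inl i) (Sum.inl i) = (((1 + γ)/2 : ℝ) : ℂ)) ∧
    (∀ i, q (Sum.inr i) (Sum.inr i) = (((1 - γ)/2 : ℝ) : ℂ))}

/-- the standard projection associated to a unitary -/
def qOfW (γ σ : ℝ) (W : Matrix (Fin k) (Fin k) ℂ) :
    Matrix (Fin k ⊕ Fin k) (Fin k ⊕ Fin k) ℂ :=
  ((1 : ℂ)/2) • (1 + Matrix.fromBlocks ((γ : ℂ) • 1) ((σ : ℂ) • W)
    (((σ : ℂ) • W)ᴴ) (-((γ : ℂ) • 1)))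

lemma mem_Sset_of_blocks {γ : ℝ} (A B D : Matrix (Fin k) (Fin k) ℂ)
    (h1 : A * A + B * Bᴴ = 1) (h2 : A * B = B * D) (h3 : Bᴴ * B + D * D = 1)
    (hA : Aᴴ = A) (hD : Dᴴ = D)
    (hAd : ∀ i, A i i = ((γ : ℝ) : ℂ)) (hDd : ∀ i, D i i = ((γ : ℝ) : ℂ)) :
    ((1 : ℂ)/2) • (1 + Matrix.fromBlocks A B Bᴴ (-D)) ∈ Sset k γ := by
  classical
  set x : Matrix (Fin k ⊕ Fin k) (Fin k ⊕ Fin k) ℂ := Matrix.fromBlocks A B Bᴴ (-D)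
    with hxdef
  have h2' : Bᴴ * A = D * Bᴴ := by
    have h := congrArg Matrix.conjTranspose h2
    rwa [Matrix.conjTranspose_mul, Matrix.conjTranspose_mul, hA, hD] at h
  have hx2 : x * x = 1 := by
    rw [hxdef, Matrix.fromBlocks_multiply, h1,
      show A * B + B * -D = 0 by rw [Matrix.mul_neg, h2, add_neg_cancel],
      show Bᴴ * A + -D * Bᴴ = 0 by rw [Matrix.neg_mul, h2', add_neg_cancel],
      show Bᴴ * B + -D * -D = 1 by rw [neg_mul_neg, h3],
      Matrix.fromBlocks_one]
  have hxh : xᴴ = x := by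
    rw [hxdef, Matrix.fromBlocks_conjTranspose, Matrix.conjTranspose_conjTranspose,
      Matrix.conjTranspose_neg, hA, hD]
  have hhalf : star ((1 : ℂ)/2) = (1 : ℂ)/2 := by
    norm_num
  refine ⟨?_, ?_, ?_, ?_⟩
  · have hp : ((1:ℂ)/2) • (1 + x) * (((1:ℂ)/2) • (1 + x))
        = ((1:ℂ)/2 * ((1:ℂ)/2)) • ((1 + x) * (1 + x)) := by
      rw [Matrix.smul_mul, Matrix.mul_smul, smul_smul]
    have hsq : (1 + x) * (1 + x) = (2:ℂ) • (1 + x) := by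
      have he : (1 + x) * (1 + x) = 1 + x + x + x * x := by noncomm_ring
      rw [he, hx2]
      module
    rw [hp, hsq, smul_smul]
    norm_num
  · rw [Matrix.conjTranspose_smul, conjTranspose_add, conjTranspose_one, hxh, hhalf]
  · intro i
    rw [Matrix.smul_apply, Matrix.add_apply, Matrix.one_apply_eq]
    rw [hxdef, show (Matrix.fromBlocks A B Bᴴ (-D)) (Sum.inl i) (Sum.inl i) = A i i from rfl,
      hAd i]
    rw [smul_eq_mul]
    push_cast
    ring
  · intro i
    rw [Matrix.smul_apply, Matrix.add_apply, Matrix.one_apply_eq]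
    rw [hxdef, show (Matrix.fromBlocks A B Bᴴ (-D)) (Sum.inr i) (Sum.inr i) = -(D i i) from
      rfl, hDd i]
    rw [smul_eq_mul]
    push_cast
    ring

lemma qOfW_mem {γ σ : ℝ} (hγσ : γ ^ 2 + σ ^ 2 = 1) (W : Matrix (Fin k) (Fin k) ℂ)
    (hW : W ∈ uSet (Fin k)) : qOfW γ σ W ∈ Sset k γ := by
  have hσs : star ((σ : ℝ) : ℂ) = ((σ : ℝ) : ℂ) := by
    rw [Complex.star_def, Complex.conj_ofReal]
  have hγs : star ((γ : ℝ) : ℂ) = ((γ : ℝ) : ℂ) := by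
    rw [Complex.star_def, Complex.conj_ofReal]
  have hcast : ((γ : ℝ) : ℂ) * ((γ : ℝ) : ℂ) + ((σ : ℝ) : ℂ) * ((σ : ℝ) : ℂ) = 1 := by
    have : ((γ ^ 2 + σ ^ 2 : ℝ) : ℂ) = 1 := by rw [hγσ]; norm_num
    push_cast at this
    linear_combination this
  have h1 : ((γ : ℂ) • (1 : Matrix (Fin k) (Fin k) ℂ)) * ((γ : ℂ) • 1)
      + ((σ : ℂ) • W) * ((σ : ℂ) • W)ᴴ = 1 := by
    rw [Matrix.conjTranspose_smul, hσs, Matrix.smul_mul, Matrix.smul_mul, Matrix.mul_smul,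
      Matrix.mul_smul, smul_smul, smul_smul, hW.2, one_mul]
    rw [show ((γ : ℂ) * (γ : ℂ)) • (1 : Matrix (Fin k) (Fin k) ℂ)
        + ((σ : ℂ) * (σ : ℂ)) • (1 : Matrix (Fin k) (Fin k) ℂ)
        = (((γ : ℂ) * (γ : ℂ)) + ((σ : ℂ) * (σ : ℂ))) • 1 by module, hcast, one_smul]
  have h2 : ((γ : ℂ) • (1 : Matrix (Fin k) (Fin k) ℂ)) * ((σ : ℂ) • W)
      = ((σ : ℂ) • W) * ((γ : ℂ) • 1) := by
    rw [Matrix.smul_mul, Matrix.mul_smul, Matrix.smul_mul, Matrix.mul_smul, one_mul, mul_one,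
      smul_smul, smul_smul, mul_comm]
  have h3 : ((σ : ℂ) • W)ᴴ * ((σ : ℂ) • W)
      + ((γ : ℂ) • (1 : Matrix (Fin k) (Fin k) ℂ)) * ((γ : ℂ) • 1) = 1 := by
    rw [Matrix.conjTranspose_smul, hσs, Matrix.smul_mul, Matrix.smul_mul, Matrix.mul_smul,
      Matrix.mul_smul, smul_smul, smul_smul, hW.1, one_mul]
    rw [show ((σ : ℂ) * (σ : ℂ)) • (1 : Matrix (Fin k) (Fin k) ℂ)
        + ((γ : ℂ) * (γ : ℂ)) • (1 : Matrix (Fin k) (Fin k) ℂ)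
        = (((γ : ℂ) * (γ : ℂ)) + ((σ : ℂ) * (σ : ℂ))) • 1 by module, hcast, one_smul]
  have hA : ((γ : ℂ) • (1 : Matrix (Fin k) (Fin k) ℂ))ᴴ = (γ : ℂ) • 1 := by
    rw [Matrix.conjTranspose_smul, conjTranspose_one, hγs]
  have hAd : ∀ i, ((γ : ℂ) • (1 : Matrix (Fin k) (Fin k) ℂ)) i i = ((γ : ℝ) : ℂ) := by
    intro i
    rw [Matrix.smul_apply, Matrix.one_apply_eq, smul_eq_mul, mul_one]
  exact mem_Sset_of_blocks _ _ _ h1 h2 h3 hA hA hAd hAd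

lemma qOfW_continuous (γ σ : ℝ) : Continuous (qOfW (k := k) γ σ) := by
  apply Continuous.fun_const_smul
  apply Continuous.add continuous_const
  apply continuous_matrix
  intro i j
  cases i with
  | inl i =>
    cases j with
    | inl j => exact continuous_const
    | inr j =>
      show Continuous fun W : Matrix (Fin k) (Fin k) ℂ => ((σ : ℂ) • W) i j
      simp only [Matrix.smul_apply]
      exact Continuous.fun_const_smul ((continuous_apply j).comp (continuous_apply i)) _
  | inr i =>
    cases j with
    | inl j =>
      show Continuous fun W : Matrix (Fin k) (Fin k) ℂ => ((σ : ℂ) • W)ᴴ i j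
      simp only [Matrix.conjTranspose_apply, Matrix.smul_apply]
      exact Continuous.star (Continuous.fun_const_smul
        ((continuous_apply i).comp (continuous_apply j)) _)
    | inr j => exact continuous_const

end Main


lemma diag_mul_diag_real {k : ℕ} (f g : Fin k → ℝ) :
    Matrix.diagonal (fun i => ((f i : ℝ) : ℂ)) * Matrix.diagonal (fun i => ((g i : ℝ) : ℂ))
      = Matrix.diagonal (fun i => ((f i * g i : ℝ) : ℂ)) := by
  rw [Matrix.diagonal_mul_diagonal]
  exact diagonal_congr fun i => by push_cast; ring

lemma smul_one_diag {k : ℕ} (c : ℝ) :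
    Matrix.diagonal (fun _ : Fin k => ((c : ℝ) : ℂ)) = ((c : ℝ) : ℂ) • 1 := by
  ext i j
  by_cases h : i = j
  · subst h
    rw [Matrix.diagonal_apply_eq, Matrix.smul_apply, Matrix.one_apply_eq, smul_eq_mul,
      mul_one]
  · rw [Matrix.diagonal_apply_ne _ h, Matrix.smul_apply, Matrix.one_apply_ne h, smul_zero]

section MainLemma

variable {k : ℕ}

set_option maxHeartbeats 3000000 in
lemma mem_joined_base {γ σ : ℝ} (hσ : 0 < σ) (hγσ : γ ^ 2 + σ ^ 2 = 1)
    (q : Matrix (Fin k ⊕ Fin k) (Fin k ⊕ Fin k) ℂ) (hq : q ∈ Sset k γ) :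
    JoinedIn (Sset k γ) q (qOfW γ σ (1 : Matrix (Fin k) (Fin k) ℂ)) := by
  classical
  obtain ⟨hq1, hq2, hq3, hq4⟩ := hq
  have hγ2 : γ ^ 2 < 1 := by nlinarith
  -- the symmetry x
  set x : Matrix (Fin k ⊕ Fin k) (Fin k ⊕ Fin k) ℂ := q + q - 1 with hxdef
  have hx2 : x * x = 1 := by
    have he : x * x = (q * q) + (q * q) + (q * q) + (q * q) - q - q - q - q + 1 := by
      rw [hxdef]; noncomm_ring
    rw [he, hq1]
    abel
  have hxh : xᴴ = x := by
    rw [hxdef, conjTranspose_sub, conjTranspose_add, conjTranspose_one, hq2]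
  -- blocks
  set a : Matrix (Fin k) (Fin k) ℂ := x.toBlocks₁₁ with hadef
  set b : Matrix (Fin k) (Fin k) ℂ := x.toBlocks₁₂ with hbdef
  set d : Matrix (Fin k) (Fin k) ℂ := -(x.toBlocks₂₂) with hddef
  have hxentry : ∀ i j, (xᴴ) i j = x i j := fun i j => by rw [hxh]
  have ha : aᴴ = a := by
    ext i j
    rw [Matrix.conjTranspose_apply, hadef]
    show star (x.toBlocks₁₁ j i) = x.toBlocks₁₁ i j
    have h := hxentry (Sum.inl i) (Sum.inl j)
    rw [Matrix.conjTranspose_apply] at h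
    exact h
  have hd : dᴴ = d := by
    ext i j
    rw [Matrix.conjTranspose_apply, hddef]
    show star ((-(x.toBlocks₂₂)) j i) = (-(x.toBlocks₂₂)) i j
    rw [Matrix.neg_apply, Matrix.neg_apply, star_neg]
    congr 1
    have h := hxentry (Sum.inr i) (Sum.inr j)
    rw [Matrix.conjTranspose_apply] at h
    exact h
  have hb21 : x.toBlocks₂₁ = bᴴ := by
    ext i j
    rw [Matrix.conjTranspose_apply, hbdef]
    show x.toBlocks₂₁ i j = star (x.toBlocks₁₂ j i)
    have h := hxentry (Sum.inr i) (Sum.inl j)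
    rw [Matrix.conjTranspose_apply] at h
    exact h.symm
  have hxb : x = Matrix.fromBlocks a b bᴴ (-d) := by
    rw [hadef, hbdef, hddef, neg_neg, ← hb21]
    exact (Matrix.fromBlocks_toBlocks x).symm
  -- block relations
  have hx2' : Matrix.fromBlocks (a * a + b * bᴴ) (a * b + b * -d)
      (bᴴ * a + -d * bᴴ) (bᴴ * b + -d * -d)
      = Matrix.fromBlocks 1 0 0 1 := by
    rw [← Matrix.fromBlocks_multiply, ← hxb, hx2, Matrix.fromBlocks_one]
  have h11 : a * a + b * bᴴ = 1 := by
    have h := congrArg Matrix.toBlocks₁₁ hx2'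
    simpa only [Matrix.toBlocks_fromBlocks₁₁] using h
  have h12 : a * b = b * d := by
    have h := congrArg Matrix.toBlocks₁₂ hx2'
    simp only [Matrix.toBlocks_fromBlocks₁₂] at h
    rw [Matrix.mul_neg] at h
    linear_combination (norm := abel) h
  have h22 : bᴴ * b + d * d = 1 := by
    have h := congrArg Matrix.toBlocks₂₂ hx2'
    simp only [Matrix.toBlocks_fromBlocks₂₂] at h
    rwa [neg_mul_neg] at h
  -- diagonals
  have haγ : ∀ i, a i i = ((γ : ℝ) : ℂ) := by
    intro i
    rw [hadef]
    show x (Sum.inl i) (Sum.inl i) = _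
    rw [hxdef, Matrix.sub_apply, Matrix.add_apply, Matrix.one_apply_eq, hq3 i]
    push_cast
    ring
  have hdγ : ∀ i, d i i = ((γ : ℝ) : ℂ) := by
    intro i
    rw [hddef, Matrix.neg_apply]
    show -(x (Sum.inr i) (Sum.inr i)) = _
    rw [hxdef, Matrix.sub_apply, Matrix.add_apply, Matrix.one_apply_eq, hq4 i]
    push_cast
    ring
  -- spectral decompositions
  have haH : a.IsHermitian := ha
  have hdH : d.IsHermitian := hd
  set v : Matrix (Fin k) (Fin k) ℂ := (haH.eigenvectorUnitary : Matrix (Fin k) (Fin k) ℂ)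
    with hvdef
  set lam : Fin k → ℝ := haH.eigenvalues with hlamdef
  set u : Matrix (Fin k) (Fin k) ℂ := (hdH.eigenvectorUnitary : Matrix (Fin k) (Fin k) ℂ)
    with hudef
  set mu : Fin k → ℝ := hdH.eigenvalues with hmudef
  have hv1 : vᴴ * v = 1 := by
    rw [hvdef, ← Matrix.star_eq_conjTranspose]
    exact Matrix.UnitaryGroup.star_mul_self _
  have hv2 : v * vᴴ = 1 := by
    rw [hvdef, ← Matrix.star_eq_conjTranspose]
    exact Matrix.mem_unitaryGroup_iff.mp (haH.eigenvectorUnitary).2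
  have hu1 : uᴴ * u = 1 := by
    rw [hudef, ← Matrix.star_eq_conjTranspose]
    exact Matrix.UnitaryGroup.star_mul_self _
  have hu2 : u * uᴴ = 1 := by
    rw [hudef, ← Matrix.star_eq_conjTranspose]
    exact Matrix.mem_unitaryGroup_iff.mp (hdH.eigenvectorUnitary).2
  have hspec : a = v * Matrix.diagonal (fun i => ((lam i : ℝ) : ℂ)) * vᴴ := by
    have h := haH.spectral_theorem
    rw [← Matrix.star_eq_conjTranspose]
    exact h
  have hspecd : d = u * Matrix.diagonal (fun j => ((mu j : ℝ) : ℂ)) * uᴴ := by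
    have h := hdH.spectral_theorem
    rw [← Matrix.star_eq_conjTranspose]
    exact h
  clear_value v u lam mu
  have hva : vᴴ * a = Matrix.diagonal (fun i => ((lam i : ℝ) : ℂ)) * vᴴ := by
    rw [hspec, ← mul_assoc, ← mul_assoc, hv1, one_mul]
  have hdu : d * u = u * Matrix.diagonal (fun j => ((mu j : ℝ) : ℂ)) := by
    rw [hspecd, mul_assoc, hu1, mul_one]
  -- the intertwiner M
  set M : Matrix (Fin k) (Fin k) ℂ := vᴴ * b * u with hMdef
  have hDM : Matrix.diagonal (fun i => ((lam i : ℝ) : ℂ)) * M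
      = M * Matrix.diagonal (fun j => ((mu j : ℝ) : ℂ)) := by
    calc Matrix.diagonal (fun i => ((lam i : ℝ) : ℂ)) * M
        = (Matrix.diagonal (fun i => ((lam i : ℝ) : ℂ)) * vᴴ) * b * u := by
          rw [hMdef]; simp only [mul_assoc]
      _ = (vᴴ * a) * b * u := by rw [hva]
      _ = vᴴ * (a * b) * u := by simp only [mul_assoc]
      _ = vᴴ * (b * d) * u := by rw [h12]
      _ = vᴴ * b * (d * u) := by simp only [mul_assoc]
      _ = vᴴ * b * (u * Matrix.diagonal (fun j => ((mu j : ℝ) : ℂ))) := by rw [hdu]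
      _ = M * Matrix.diagonal (fun j => ((mu j : ℝ) : ℂ)) := by
          rw [hMdef]; simp only [mul_assoc]
  have hMeig : ∀ i j, M i j ≠ 0 → lam i = mu j := by
    intro i j hne
    have h := Matrix.ext_iff.mpr hDM i j
    rw [Matrix.diagonal_mul, Matrix.mul_diagonal] at h
    have h2 : (((lam i : ℝ) : ℂ) - ((mu j : ℝ) : ℂ)) * M i j = 0 := by
      linear_combination h
    rcases mul_eq_zero.mp h2 with h3 | h3
    · rw [sub_eq_zero] at h3
      exact_mod_cast h3
    · exact absurd h3 hne
  have hbb : b * bᴴ = 1 - a * a := by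
    linear_combination (norm := abel) h11
  have hbb' : bᴴ * b = 1 - d * d := by
    linear_combination (norm := abel) h22
  have hM2 : M * Mᴴ = Matrix.diagonal (fun i => ((1 - (lam i) ^ 2 : ℝ) : ℂ)) := by
    have hMconj : Mᴴ = uᴴ * bᴴ * v := by
      rw [hMdef, conjTranspose_mul, conjTranspose_mul, Matrix.conjTranspose_conjTranspose,
        mul_assoc]
    calc M * Mᴴ = vᴴ * b * (u * uᴴ) * bᴴ * v := by
          rw [hMdef, hMconj]; simp only [mul_assoc]
      _ = vᴴ * (b * bᴴ) * v := by rw [hu2]; simp only [mul_assoc, one_mul]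
      _ = vᴴ * (1 - a * a) * v := by rw [hbb]
      _ = vᴴ * v - (vᴴ * a) * (a * v) := by
          rw [mul_sub, sub_mul, mul_one]; simp only [mul_assoc]
      _ = 1 - (Matrix.diagonal (fun i => ((lam i : ℝ) : ℂ)) * vᴴ) * (a * v) := by
          rw [hv1, hva]
      _ = 1 - Matrix.diagonal (fun i => ((lam i : ℝ) : ℂ)) * (vᴴ * a) * v := by
          simp only [mul_assoc]
      _ = 1 - Matrix.diagonal (fun i => ((lam i : ℝ) : ℂ))
            * Matrix.diagonal (fun i => ((lam i : ℝ) : ℂ)) * (vᴴ * v) := by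
          rw [hva]; simp only [mul_assoc]
      _ = Matrix.diagonal (fun i => ((1 - (lam i) ^ 2 : ℝ) : ℂ)) := by
          rw [hv1, mul_one, Matrix.diagonal_mul_diagonal,
            show (1 : Matrix (Fin k) (Fin k) ℂ) = Matrix.diagonal (fun _ => 1) from
              Matrix.diagonal_one.symm, Matrix.diagonal_sub]
          refine diagonal_congr fun i => ?_
          push_cast
          ring
  have hM3 : Mᴴ * M = Matrix.diagonal (fun j => ((1 - (mu j) ^ 2 : ℝ) : ℂ)) := by
    have hMconj : Mᴴ = uᴴ * bᴴ * v := by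
      rw [hMdef, conjTranspose_mul, conjTranspose_mul, Matrix.conjTranspose_conjTranspose,
        mul_assoc]
    have hud : uᴴ * d = Matrix.diagonal (fun j => ((mu j : ℝ) : ℂ)) * uᴴ := by
      rw [hspecd, ← mul_assoc, ← mul_assoc, hu1, one_mul]
    calc Mᴴ * M = uᴴ * bᴴ * (v * vᴴ) * b * u := by
          rw [hMdef, hMconj]; simp only [mul_assoc]
      _ = uᴴ * (bᴴ * b) * u := by rw [hv2]; simp only [mul_assoc, one_mul]
      _ = uᴴ * (1 - d * d) * u := by rw [hbb']
      _ = uᴴ * u - (uᴴ * d) * (d * u) := by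
          rw [mul_sub, sub_mul, mul_one]; simp only [mul_assoc]
      _ = 1 - (Matrix.diagonal (fun j => ((mu j : ℝ) : ℂ)) * uᴴ)
            * (u * Matrix.diagonal (fun j => ((mu j : ℝ) : ℂ))) := by
          rw [hu1, hud, hdu]
      _ = 1 - Matrix.diagonal (fun j => ((mu j : ℝ) : ℂ)) * (uᴴ * u)
            * Matrix.diagonal (fun j => ((mu j : ℝ) : ℂ)) := by
          simp only [mul_assoc]
      _ = Matrix.diagonal (fun j => ((1 - (mu j) ^ 2 : ℝ) : ℂ)) := by
          rw [hu1, mul_one, Matrix.diagonal_mul_diagonal,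
            show (1 : Matrix (Fin k) (Fin k) ℂ) = Matrix.diagonal (fun _ => 1) from
              Matrix.diagonal_one.symm, Matrix.diagonal_sub]
          refine diagonal_congr fun j => ?_
          push_cast
          ring
  -- equality of traces
  have hsum : ∑ i, lam i = ∑ j, mu j := by
    have t1 : a.trace = ∑ i, ((lam i : ℝ) : ℂ) := by
      rw [hspec, Matrix.trace_mul_cycle, hv1, one_mul, Matrix.trace_diagonal]
    have t2 : a.trace = ∑ _i : Fin k, ((γ : ℝ) : ℂ) := by
      rw [Matrix.trace]
      exact Finset.sum_congr rfl fun i _ => haγ i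
    have t3 : d.trace = ∑ j, ((mu j : ℝ) : ℂ) := by
      rw [hspecd, Matrix.trace_mul_cycle, hu1, one_mul, Matrix.trace_diagonal]
    have t4 : d.trace = ∑ _i : Fin k, ((γ : ℝ) : ℂ) := by
      rw [Matrix.trace]
      exact Finset.sum_congr rfl fun i _ => hdγ i
    have t5 : ((∑ i, lam i : ℝ) : ℂ) = ((∑ j, mu j : ℝ) : ℂ) := by
      push_cast
      rw [← t1, ← t3, t2, t4]
    exact_mod_cast t5
  obtain ⟨hc1, hc2⟩ := card_pm_eq hMeig hM2 hM3 hsum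
  set φ1 : {i // lam i = 1} ≃ {j // mu j = 1} := Fintype.equivOfCardEq hc1 with hφ1
  set φ2 : {i // lam i = -1} ≃ {j // mu j = -1} := Fintype.equivOfCardEq hc2 with hφ2
  set eps : Fin k → Option (Fin k) := fun i =>
    if h : lam i = 1 then some (φ1 ⟨i, h⟩).1
    else if h' : lam i = -1 then some (φ2 ⟨i, h'⟩).1 else none with hepsdef
  have p1 : ∀ i j, eps i = some j → (lam i = 1 ∧ mu j = 1) ∨ (lam i = -1 ∧ mu j = -1) := by
    intro i j h
    rw [hepsdef] at h
    simp only at h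
    split_ifs at h with h1 h2
    · left
      refine ⟨h1, ?_⟩
      rw [Option.some_inj] at h
      rw [← h]
      exact (φ1 ⟨i, h1⟩).2
    · right
      refine ⟨h2, ?_⟩
      rw [Option.some_inj] at h
      rw [← h]
      exact (φ2 ⟨i, h2⟩).2
  have p2 : ∀ i, (lam i = 1 ∨ lam i = -1) → (eps i).isSome := by
    intro i h
    rw [hepsdef]
    simp only
    rcases h with h | h
    · rw [dif_pos h]
      rfl
    · by_cases h1 : lam i = 1
      · rw [dif_pos h1]; rfl
      · rw [dif_neg h1, dif_pos h]; rfl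
  have p3 : ∀ j, (mu j = 1 ∨ mu j = -1) → ∃ i, eps i = some j := by
    intro j hj
    rcases hj with hj | hj
    · refine ⟨(φ1.symm ⟨j, hj⟩).1, ?_⟩
      have hp : lam ((φ1.symm ⟨j, hj⟩).1) = 1 := (φ1.symm ⟨j, hj⟩).2
      rw [hepsdef]
      simp only
      rw [dif_pos hp]
      have he : (⟨(φ1.symm ⟨j, hj⟩).1, hp⟩ : {i // lam i = 1}) = φ1.symm ⟨j, hj⟩ :=
        Subtype.ext rfl
      rw [he, Equiv.apply_symm_apply]
    · refine ⟨(φ2.symm ⟨j, hj⟩).1, ?_⟩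
      have hp : lam ((φ2.symm ⟨j, hj⟩).1) = -1 := (φ2.symm ⟨j, hj⟩).2
      have hp1 : ¬ (lam ((φ2.symm ⟨j, hj⟩).1) = 1) := by
        rw [hp]; norm_num
      rw [hepsdef]
      simp only
      rw [dif_neg hp1, dif_pos hp]
      have he : (⟨(φ2.symm ⟨j, hj⟩).1, hp⟩ : {i // lam i = -1}) = φ2.symm ⟨j, hj⟩ :=
        Subtype.ext rfl
      rw [he, Equiv.apply_symm_apply]
  have p4 : ∀ i i' j, eps i = some j → eps i' = some j → i = i' := by
    intro i i' j h h'
    rw [hepsdef] at h h'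
    simp only at h h'
    by_cases h1 : lam i = 1
    · rw [dif_pos h1] at h
      by_cases h2 : lam i' = 1
      · rw [dif_pos h2] at h'
        rw [Option.some_inj] at h h'
        have he : φ1 ⟨i, h1⟩ = φ1 ⟨i', h2⟩ := Subtype.ext (h.trans h'.symm)
        exact congrArg Subtype.val (φ1.injective he)
      · rw [dif_neg h2] at h'
        by_cases h3 : lam i' = -1
        · rw [dif_pos h3] at h'
          rw [Option.some_inj] at h h'
          exfalso
          have hj1 : mu j = 1 := by rw [← h]; exact (φ1 ⟨i, h1⟩).2
          have hj2 : mu j = -1 := by rw [← h']; exact (φ2 ⟨i', h3⟩).2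
          rw [hj1] at hj2
          norm_num at hj2
        · rw [dif_neg h3] at h'
          exact absurd h' (by simp)
    · rw [dif_neg h1] at h
      by_cases h1' : lam i = -1
      · rw [dif_pos h1'] at h
        by_cases h2 : lam i' = 1
        · rw [dif_pos h2] at h'
          rw [Option.some_inj] at h h'
          exfalso
          have hj1 : mu j = -1 := by rw [← h]; exact (φ2 ⟨i, h1'⟩).2
          have hj2 : mu j = 1 := by rw [← h']; exact (φ1 ⟨i', h2⟩).2
          rw [hj2] at hj1
          norm_num at hj1
        · rw [dif_neg h2] at h'
          by_cases h3 : lam i' = -1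
          · rw [dif_pos h3] at h'
            rw [Option.some_inj] at h h'
            have he : φ2 ⟨i, h1'⟩ = φ2 ⟨i', h3⟩ := Subtype.ext (h.trans h'.symm)
            exact congrArg Subtype.val (φ2.injective he)
          · rw [dif_neg h3] at h'
            exact absurd h' (by simp)
      · rw [dif_neg h1'] at h
        exact absurd h (by simp)
  -- the unitary W0
  have hΩ1 : Omega lam M eps * (Omega lam M eps)ᴴ = 1 :=
    Omega_mul_conj hMeig hM2 hM3 p1 p2 p4
  have hΩ2 : (Omega lam M eps)ᴴ * Omega lam M eps = 1 :=
    Omegaconj_mul hMeig hM2 hM3 p1 p3 p4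
  set W0 : Matrix (Fin k) (Fin k) ℂ := v * Omega lam M eps * uᴴ with hW0def
  have hW0conj : W0ᴴ = u * (Omega lam M eps)ᴴ * vᴴ := by
    rw [hW0def, conjTranspose_mul, conjTranspose_mul, Matrix.conjTranspose_conjTranspose,
      mul_assoc]
  have hW0 : W0 ∈ uSet (Fin k) := by
    constructor
    · rw [hW0conj, hW0def]
      calc u * (Omega lam M eps)ᴴ * vᴴ * (v * Omega lam M eps * uᴴ)
          = u * ((Omega lam M eps)ᴴ * ((vᴴ * v) * Omega lam M eps)) * uᴴ := by
            simp only [mul_assoc]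
        _ = 1 := by rw [hv1, one_mul, hΩ2, mul_one, hu2]
    · rw [hW0conj, hW0def]
      calc v * Omega lam M eps * uᴴ * (u * (Omega lam M eps)ᴴ * vᴴ)
          = v * (Omega lam M eps * ((uᴴ * u) * (Omega lam M eps)ᴴ)) * vᴴ := by
            simp only [mul_assoc]
        _ = 1 := by
            rw [hu1, one_mul, hΩ1, mul_one, hv2]
  -- cancellation helpers
  have hcan1 : ∀ X : Matrix (Fin k) (Fin k) ℂ, vᴴ * (v * X) = X := by
    intro X; rw [← mul_assoc, hv1, one_mul]
  have hcan3 : ∀ X : Matrix (Fin k) (Fin k) ℂ, uᴴ * (u * X) = X := by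
    intro X; rw [← mul_assoc, hu1, one_mul]
  have hcanO1 : ∀ X : Matrix (Fin k) (Fin k) ℂ,
      Omega lam M eps * ((Omega lam M eps)ᴴ * X) = X := by
    intro X; rw [← mul_assoc, hΩ1, one_mul]
  have hcanO2 : ∀ X : Matrix (Fin k) (Fin k) ℂ,
      (Omega lam M eps)ᴴ * (Omega lam M eps * X) = X := by
    intro X; rw [← mul_assoc, hΩ2, one_mul]
  have hcomO : ∀ (g : ℝ → ℝ) (X : Matrix (Fin k) (Fin k) ℂ),
      Omega lam M eps * (Matrix.diagonal (fun j => ((g (mu j) : ℝ) : ℂ)) * X)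
        = Matrix.diagonal (fun i => ((g (lam i) : ℝ) : ℂ)) * (Omega lam M eps * X) := by
    intro g X
    rw [← mul_assoc, ← diag_comm_Omega hMeig p1 g, mul_assoc]
  -- eigenvalue bounds
  have hlam2 : ∀ i, (lam i) ^ 2 ≤ 1 := lam_sq_le hM2
  have hmu2 : ∀ j, (mu j) ^ 2 ≤ 1 := mu_sq_le hM3
  -- the path data
  set ft : ℝ → ℝ → ℝ := fun t y => (1 - t) * y + t * γ with hftdef
  set st : ℝ → ℝ → ℝ := fun t y => Real.sqrt (1 - (ft t y) ^ 2) with hstdef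
  have hft2 : ∀ t y : ℝ, 0 ≤ t → t ≤ 1 → y ^ 2 ≤ 1 → (ft t y) ^ 2 ≤ 1 := by
    intro t y ht0 ht1 hy
    simp only [hftdef]
    nlinarith [mul_nonneg (mul_nonneg (sub_nonneg.2 ht1) ht0) (sq_nonneg (y - γ)),
      hγ2.le, sq_nonneg (y - γ), sq_nonneg (y + γ)]
  have hst2 : ∀ t y : ℝ, 0 ≤ t → t ≤ 1 → y ^ 2 ≤ 1 →
      ft t y * ft t y + st t y * st t y = 1 := by
    intro t y ht0 ht1 hy
    have h2 := hft2 t y ht0 ht1 hy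
    simp only [hstdef]
    rw [Real.mul_self_sqrt (by nlinarith)]
    nlinarith [sq_nonneg (ft t y)]
  set At : ℝ → Matrix (Fin k) (Fin k) ℂ :=
    fun t => v * Matrix.diagonal (fun i => ((ft t (lam i) : ℝ) : ℂ)) * vᴴ with hAtdef
  set Bt : ℝ → Matrix (Fin k) (Fin k) ℂ :=
    fun t => v * (Matrix.diagonal (fun i => ((st t (lam i) : ℝ) : ℂ)) * Omega lam M eps) * uᴴ
    with hBtdef
  set Dt : ℝ → Matrix (Fin k) (Fin k) ℂ :=
    fun t => u * Matrix.diagonal (fun j => ((ft t (mu j) : ℝ) : ℂ)) * uᴴ with hDtdef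
  set F : ℝ → Matrix (Fin k ⊕ Fin k) (Fin k ⊕ Fin k) ℂ :=
    fun t => ((1 : ℂ)/2) • (1 + Matrix.fromBlocks (At t) (Bt t) ((Bt t)ᴴ) (-(Dt t)))
    with hFdef
  have hBtconj : ∀ t, (Bt t)ᴴ
      = u * ((Omega lam M eps)ᴴ * Matrix.diagonal (fun i => ((st t (lam i) : ℝ) : ℂ))) * vᴴ := by
    intro t
    simp only [hBtdef]
    rw [conjTranspose_mul, conjTranspose_mul, conjTranspose_mul,
      Matrix.conjTranspose_conjTranspose, diag_real_conjTranspose]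
    simp only [mul_assoc]
  have hAtH : ∀ t, (At t)ᴴ = At t := by
    intro t
    simp only [hAtdef]
    rw [conjTranspose_mul, conjTranspose_mul, Matrix.conjTranspose_conjTranspose,
      diag_real_conjTranspose, mul_assoc]
  have hDtH : ∀ t, (Dt t)ᴴ = Dt t := by
    intro t
    simp only [hDtdef]
    rw [conjTranspose_mul, conjTranspose_mul, Matrix.conjTranspose_conjTranspose,
      diag_real_conjTranspose, mul_assoc]
  -- affine expressions give constant diagonals
  have hdiag_affine : ∀ (t : ℝ) (w : Fin k → ℝ),
      Matrix.diagonal (fun i => ((ft t (w i) : ℝ) : ℂ))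
        = ((1 - t : ℝ) : ℂ) • Matrix.diagonal (fun i => ((w i : ℝ) : ℂ))
          + ((t * γ : ℝ) : ℂ) • 1 := by
    intro t w
    ext i j
    by_cases h : i = j
    · subst h
      rw [Matrix.diagonal_apply_eq, Matrix.add_apply, Matrix.smul_apply, Matrix.smul_apply,
        Matrix.diagonal_apply_eq, Matrix.one_apply_eq, smul_eq_mul, smul_eq_mul,
        mul_one]
      simp only [hftdef]
      push_cast
      ring
    · rw [Matrix.diagonal_apply_ne _ h, Matrix.add_apply, Matrix.smul_apply,
        Matrix.smul_apply, Matrix.diagonal_apply_ne _ h, Matrix.one_apply_ne h, smul_zero,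
        smul_zero, add_zero]
  have hAt_affine : ∀ t, At t = ((1 - t : ℝ) : ℂ) • a + ((t * γ : ℝ) : ℂ) • 1 := by
    intro t
    simp only [hAtdef]
    rw [hdiag_affine t lam, mul_add, add_mul, Matrix.mul_smul, Matrix.mul_smul,
      Matrix.smul_mul, Matrix.smul_mul, mul_one, hv2, hspec]
  have hDt_affine : ∀ t, Dt t = ((1 - t : ℝ) : ℂ) • d + ((t * γ : ℝ) : ℂ) • 1 := by
    intro t
    simp only [hDtdef]
    rw [hdiag_affine t mu, mul_add, add_mul, Matrix.mul_smul, Matrix.mul_smul,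
      Matrix.smul_mul, Matrix.smul_mul, mul_one, hu2, hspecd]
  have hAtd : ∀ t i, At t i i = ((γ : ℝ) : ℂ) := by
    intro t i
    rw [hAt_affine t, Matrix.add_apply, Matrix.smul_apply, Matrix.smul_apply, haγ i,
      Matrix.one_apply_eq, smul_eq_mul, smul_eq_mul, mul_one]
    push_cast
    ring
  have hDtd : ∀ t i, Dt t i i = ((γ : ℝ) : ℂ) := by
    intro t i
    rw [hDt_affine t, Matrix.add_apply, Matrix.smul_apply, Matrix.smul_apply, hdγ i,
      Matrix.one_apply_eq, smul_eq_mul, smul_eq_mul, mul_one]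
    push_cast
    ring
  -- membership of the path
  have hFmem : ∀ t : ℝ, 0 ≤ t → t ≤ 1 → F t ∈ Sset k γ := by
    intro t ht0 ht1
    have e1 : At t * At t
        = v * (Matrix.diagonal (fun i => ((ft t (lam i) * ft t (lam i) : ℝ) : ℂ)) * vᴴ) := by
      simp only [hAtdef]
      simp only [mul_assoc]
      rw [hcan1, show Matrix.diagonal (fun i => ((ft t (lam i) : ℝ) : ℂ))
          * (Matrix.diagonal (fun i => ((ft t (lam i) : ℝ) : ℂ)) * vᴴ)
          = (Matrix.diagonal (fun i => ((ft t (lam i) : ℝ) : ℂ))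
            * Matrix.diagonal (fun i => ((ft t (lam i) : ℝ) : ℂ))) * vᴴ from
          (mul_assoc _ _ _).symm, diag_mul_diag_real]
    have e2 : Bt t * (Bt t)ᴴ
        = v * (Matrix.diagonal (fun i => ((st t (lam i) * st t (lam i) : ℝ) : ℂ)) * vᴴ) := by
      rw [hBtconj t]
      simp only [hBtdef]
      simp only [mul_assoc]
      rw [hcan3, hcanO1, show Matrix.diagonal (fun i => ((st t (lam i) : ℝ) : ℂ))
          * (Matrix.diagonal (fun i => ((st t (lam i) : ℝ) : ℂ)) * vᴴ)
          = (Matrix.diagonal (fun i => ((st t (lam i) : ℝ) : ℂ))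
            * Matrix.diagonal (fun i => ((st t (lam i) : ℝ) : ℂ))) * vᴴ from
          (mul_assoc _ _ _).symm, diag_mul_diag_real]
    have e3 : Bt t * Dt t
        = v * (Matrix.diagonal (fun i => ((st t (lam i) : ℝ) : ℂ))
          * (Matrix.diagonal (fun i => ((ft t (lam i) : ℝ) : ℂ))
            * (Omega lam M eps * uᴴ))) := by
      simp only [hBtdef, hDtdef]
      simp only [mul_assoc]
      rw [hcan3, hcomO (fun y => ft t y) uᴴ]
    have e4 : At t * Bt t
        = v * (Matrix.diagonal (fun i => ((ft t (lam i) : ℝ) : ℂ))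
          * (Matrix.diagonal (fun i => ((st t (lam i) : ℝ) : ℂ))
            * (Omega lam M eps * uᴴ))) := by
      simp only [hAtdef, hBtdef]
      simp only [mul_assoc]
      rw [hcan1]
    have e5 : (Bt t)ᴴ * Bt t
        = u * (Matrix.diagonal (fun j => ((st t (mu j) * st t (mu j) : ℝ) : ℂ)) * uᴴ) := by
      rw [hBtconj t]
      simp only [hBtdef]
      simp only [mul_assoc]
      rw [hcan1, show Matrix.diagonal (fun i => ((st t (lam i) : ℝ) : ℂ))
          * (Matrix.diagonal (fun i => ((st t (lam i) : ℝ) : ℂ))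
            * (Omega lam M eps * uᴴ))
          = (Matrix.diagonal (fun i => ((st t (lam i) : ℝ) : ℂ))
            * Matrix.diagonal (fun i => ((st t (lam i) : ℝ) : ℂ)))
            * (Omega lam M eps * uᴴ) from (mul_assoc _ _ _).symm, diag_mul_diag_real,
        show Matrix.diagonal (fun i => ((st t (lam i) * st t (lam i) : ℝ) : ℂ))
          * (Omega lam M eps * uᴴ) = (Matrix.diagonal
            (fun i => (((fun y => st t y * st t y) (lam i) : ℝ) : ℂ)) * Omega lam M eps) * uᴴ
          from (mul_assoc _ _ _).symm,
        diag_comm_Omega hMeig p1 (fun y => st t y * st t y)]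
      simp only [mul_assoc]
      rw [hcanO2]
    have e6 : Dt t * Dt t
        = u * (Matrix.diagonal (fun j => ((ft t (mu j) * ft t (mu j) : ℝ) : ℂ)) * uᴴ) := by
      simp only [hDtdef]
      simp only [mul_assoc]
      rw [hcan3, show Matrix.diagonal (fun j => ((ft t (mu j) : ℝ) : ℂ))
          * (Matrix.diagonal (fun j => ((ft t (mu j) : ℝ) : ℂ)) * uᴴ)
          = (Matrix.diagonal (fun j => ((ft t (mu j) : ℝ) : ℂ))
            * Matrix.diagonal (fun j => ((ft t (mu j) : ℝ) : ℂ))) * uᴴ from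
          (mul_assoc _ _ _).symm, diag_mul_diag_real]
    have hh1 : At t * At t + Bt t * (Bt t)ᴴ = 1 := by
      rw [e1, e2, ← mul_add, ← add_mul, Matrix.diagonal_add,
        show (fun i => (((ft t (lam i) * ft t (lam i) : ℝ) : ℂ))
            + (((st t (lam i) * st t (lam i) : ℝ) : ℂ)))
          = fun _ : Fin k => (1 : ℂ) by
          funext i
          push_cast
          rw [show ((ft t (lam i) : ℂ) * (ft t (lam i) : ℂ)
            + (st t (lam i) : ℂ) * (st t (lam i) : ℂ))
            = (((ft t (lam i) * ft t (lam i) + st t (lam i) * st t (lam i) : ℝ)) : ℂ) by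
            push_cast; ring, hst2 t (lam i) ht0 ht1 (hlam2 i), Complex.ofReal_one],
        Matrix.diagonal_one, one_mul, hv2]
    have hh2 : At t * Bt t = Bt t * Dt t := by
      rw [e3, e4]
      congr 1
      conv_lhs => rw [← mul_assoc, diag_mul_diag_real]
      conv_rhs => rw [← mul_assoc, diag_mul_diag_real]
      exact congrArg (· * (Omega lam M eps * uᴴ))
        (diagonal_congr fun i => by push_cast; ring)
    have hh3 : (Bt t)ᴴ * Bt t + Dt t * Dt t = 1 := by
      rw [e5, e6, ← mul_add, ← add_mul, Matrix.diagonal_add,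
        show (fun j => (((st t (mu j) * st t (mu j) : ℝ) : ℂ))
            + (((ft t (mu j) * ft t (mu j) : ℝ) : ℂ)))
          = fun _ : Fin k => (1 : ℂ) by
          funext j
          push_cast
          rw [show ((st t (mu j) : ℂ) * (st t (mu j) : ℂ)
            + (ft t (mu j) : ℂ) * (ft t (mu j) : ℂ))
            = (((ft t (mu j) * ft t (mu j) + st t (mu j) * st t (mu j) : ℝ)) : ℂ) by
            push_cast; ring, hst2 t (mu j) ht0 ht1 (hmu2 j), Complex.ofReal_one],
        Matrix.diagonal_one, one_mul, hu2]
    simp only [hFdef]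
    exact mem_Sset_of_blocks _ _ _ hh1 hh2 hh3 (hAtH t) (hDtH t) (hAtd t) (hDtd t)
  -- endpoints
  have hF0 : F 0 = q := by
    have hA0 : At 0 = a := by
      simp only [hAtdef]
      rw [show (fun i => ((ft 0 (lam i) : ℝ) : ℂ)) = fun i => ((lam i : ℝ) : ℂ) by
        funext i; simp [hftdef], ← hspec]
    have hD0 : Dt 0 = d := by
      simp only [hDtdef]
      rw [show (fun j => ((ft 0 (mu j) : ℝ) : ℂ)) = fun j => ((mu j : ℝ) : ℂ) by
        funext j; simp [hftdef], ← hspecd]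
    have hB0 : Bt 0 = b := by
      simp only [hBtdef]
      rw [show (fun i => ((st 0 (lam i) : ℝ) : ℂ))
          = fun i => ((Real.sqrt (1 - (lam i) ^ 2) : ℝ) : ℂ) by
        funext i; simp [hstdef, hftdef], diag_sqrt_mul_Omega hM2 p1, hMdef]
      calc v * (vᴴ * b * u) * uᴴ = (v * vᴴ) * b * (u * uᴴ) := by simp only [mul_assoc]
        _ = b := by rw [hv2, hu2, one_mul, mul_one]
    simp only [hFdef]
    rw [hA0, hB0, hD0, ← hxb, hxdef]
    module
  have hF1 : F 1 = qOfW γ σ W0 := by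
    have hA1 : At 1 = ((γ : ℝ) : ℂ) • 1 := by
      simp only [hAtdef]
      rw [show (fun i => ((ft 1 (lam i) : ℝ) : ℂ)) = fun _ : Fin k => ((γ : ℝ) : ℂ) by
        funext i; simp [hftdef], smul_one_diag, Matrix.mul_smul, Matrix.smul_mul, mul_one,
        hv2]
    have hD1 : Dt 1 = ((γ : ℝ) : ℂ) • 1 := by
      simp only [hDtdef]
      rw [show (fun j => ((ft 1 (mu j) : ℝ) : ℂ)) = fun _ : Fin k => ((γ : ℝ) : ℂ) by
        funext j; simp [hftdef], smul_one_diag, Matrix.mul_smul, Matrix.smul_mul, mul_one,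
        hu2]
    have hB1 : Bt 1 = ((σ : ℝ) : ℂ) • W0 := by
      simp only [hBtdef]
      rw [show (fun i => ((st 1 (lam i) : ℝ) : ℂ)) = fun _ : Fin k => ((σ : ℝ) : ℂ) by
        funext i
        simp only [hstdef, hftdef]
        rw [show (1 - (1:ℝ)) * (lam i) + 1 * γ = γ by ring,
          show (1:ℝ) - γ ^ 2 = σ ^ 2 by linarith, Real.sqrt_sq hσ.le],
        smul_one_diag, Matrix.smul_mul, one_mul, Matrix.mul_smul, Matrix.smul_mul, hW0def]
    simp only [hFdef]
    rw [hA1, hB1, hD1, qOfW]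
  -- continuity
  have hftcont : ∀ y : ℝ, Continuous fun t => ft t y := by
    intro y
    simp only [hftdef]
    exact ((continuous_const.sub continuous_id).mul continuous_const).add
      (continuous_id.mul continuous_const)
  have hstcont : ∀ y : ℝ, Continuous fun t => st t y := by
    intro y
    simp only [hstdef]
    exact Real.continuous_sqrt.comp (continuous_const.sub ((hftcont y).pow 2))
  have hdiagcont : ∀ (g : ℝ → ℝ → ℝ) (w : Fin k → ℝ), (∀ y, Continuous fun t => g t y) →
      Continuous fun t => Matrix.diagonal (fun i => ((g t (w i) : ℝ) : ℂ)) := by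
    intro g w hg
    apply continuous_matrix
    intro i j
    by_cases h : i = j
    · subst h
      simp only [Matrix.diagonal_apply_eq]
      exact Complex.continuous_ofReal.comp (hg (w i))
    · simp only [Matrix.diagonal_apply_ne _ h]
      exact continuous_const
  have hAtcont : Continuous At := by
    simp only [hAtdef]
    exact (Continuous.matrix_mul continuous_const (hdiagcont ft lam hftcont)).matrix_mul
      continuous_const
  have hDtcont : Continuous Dt := by
    simp only [hDtdef]
    exact (Continuous.matrix_mul continuous_const (hdiagcont ft mu hftcont)).matrix_mul
      continuous_const
  have hBtcont : Continuous Bt := by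
    simp only [hBtdef]
    exact (Continuous.matrix_mul continuous_const
      (Continuous.matrix_mul (hdiagcont st lam hstcont) continuous_const)).matrix_mul
      continuous_const
  have hBtHcont : Continuous fun t => (Bt t)ᴴ := by
    apply continuous_matrix
    intro i j
    simp only [Matrix.conjTranspose_apply]
    exact Continuous.star ((continuous_apply i).comp ((continuous_apply j).comp hBtcont))
  have hFcont : Continuous F := by
    simp only [hFdef]
    apply Continuous.fun_const_smul
    apply Continuous.add continuous_const
    apply continuous_matrix
    intro i j
    cases i with
    | inl i =>
      cases j with
      | inl j =>
        show Continuous fun t => At t i j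
        exact ((continuous_apply j).comp (continuous_apply i)).comp hAtcont
      | inr j =>
        show Continuous fun t => Bt t i j
        exact ((continuous_apply j).comp (continuous_apply i)).comp hBtcont
    | inr i =>
      cases j with
      | inl j =>
        show Continuous fun t => (Bt t)ᴴ i j
        exact ((continuous_apply j).comp (continuous_apply i)).comp hBtHcont
      | inr j =>
        show Continuous fun t => (-(Dt t)) i j
        simp only [Matrix.neg_apply]
        exact (((continuous_apply j).comp (continuous_apply i)).comp hDtcont).neg
  -- assemble
  have hseg1 := joinedIn_segment F hFcont hFmem
  rw [hF0, hF1] at hseg1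
  have hseg2 : JoinedIn (Sset k γ) (qOfW γ σ W0) (qOfW γ σ 1) := by
    have h := (unitary_joinedIn W0 hW0).map (qOfW_continuous γ σ)
    refine h.mono ?_
    rintro y ⟨U, hU, rfl⟩
    exact qOfW_mem hγσ U hU
  exact hseg1.trans hseg2

lemma main_pathConnected (k : ℕ) (γ σ : ℝ) (hσ : 0 < σ) (hγσ : γ ^ 2 + σ ^ 2 = 1) :
    IsPathConnected (Sset k γ) := by
  refine ⟨qOfW γ σ 1, qOfW_mem hγσ 1 uSet_one, ?_⟩
  intro y hy
  exact (mem_joined_base hσ hγσ y hy).symm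

end MainLemma


/-! ### Degenerate case: projections with 0/1 diagonal -/

section Degenerate

variable {m : Type*} [Fintype m] [DecidableEq m]

lemma col_zero_of_diag_zero (p : Matrix m m ℂ) (hp : p * p = p) (hps : pᴴ = p)
    {i : m} (h0 : p i i = 0) : ∀ j, p j i = 0 := by
  have hpp : pᴴ * p = p := by rw [hps, hp]
  have h := Matrix.ext_iff.mpr hpp i i
  rw [Matrix.mul_apply] at h
  have h2 : ∑ j, (starRingEnd ℂ) (p j i) * p j i = 0 := by
    rw [← h0, ← h]
    apply Finset.sum_congr rfl
    intro j _
    rw [Matrix.conjTranspose_apply, Complex.star_def]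
  exact sum_conj_mul_eq_zero h2

lemma proj01 (p : Matrix m m ℂ) (hp : p * p = p) (hps : pᴴ = p)
    (h01 : ∀ i, p i i = 0 ∨ p i i = 1) : p = Matrix.diagonal (fun i => p i i) := by
  have hone : ∀ i, p i i = 1 → ∀ j, j ≠ i → p j i = 0 := by
    intro i h1 j hj
    have h1p : (1 - p) * (1 - p) = 1 - p := by
      have he : (1 - p) * (1 - p) = 1 - p - p + p * p := by noncomm_ring
      rw [he, hp]
      abel
    have h1ps : (1 - p)ᴴ = 1 - p := by
      rw [conjTranspose_sub, conjTranspose_one, hps]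
    have h0 : (1 - p) i i = 0 := by
      rw [Matrix.sub_apply, Matrix.one_apply_eq, h1, sub_self]
    have h2 := col_zero_of_diag_zero _ h1p h1ps h0 j
    rw [Matrix.sub_apply, Matrix.one_apply_ne hj] at h2
    linear_combination -h2
  ext i j
  by_cases h : i = j
  · subst h
    rw [Matrix.diagonal_apply_eq]
  · rw [Matrix.diagonal_apply_ne _ h]
    rcases h01 j with h0 | h1
    · exact col_zero_of_diag_zero p hp hps h0 i
    · exact hone j h1 i h

end Degenerate

end TwoValuedProj

open TwoValuedProj Matrix in
/-- Let `d = cos²θ · e + sin²θ · e^⊥` where `e` is a diagonal rank-`n` orthogonal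
projection in `M_{2n}(ℂ)` and `θ ∈ [0, π/2]`. Then the set of orthogonal projections
with diagonal `d` is path-connected. -/
theorem projections_two_valued_diagonal_pathConnected (n : ℕ) (θ : ℝ)
    (hθ0 : 0 ≤ θ) (hθ1 : θ ≤ Real.pi / 2)
    (e : Matrix (Fin (2 * n)) (Fin (2 * n)) ℂ)
    (he : e.IsDiag) (hee : e * e = e) (hes : e.conjTranspose = e) (hr : e.rank = n) :
    IsPathConnected {p : Matrix (Fin (2 * n)) (Fin (2 * n)) ℂ |
      p * p = p ∧ p.conjTranspose = p ∧
      ∀ i, p i i = ((Real.cos θ ^ 2 : ℝ) : ℂ) * e i i +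
        ((Real.sin θ ^ 2 : ℝ) : ℂ) * (1 - e) i i} := by
  classical
  have hpyth : Real.cos θ ^ 2 + Real.sin θ ^ 2 = 1 := by
    rw [add_comm]
    exact Real.sin_sq_add_cos_sq θ
  have he01 : ∀ i, e i i = 0 ∨ e i i = 1 := by
    intro i
    have h := Matrix.ext_iff.mpr hee i i
    rw [Matrix.mul_apply, Finset.sum_eq_single i] at h
    · have h2 : e i i * (e i i - 1) = 0 := by linear_combination h
      rcases mul_eq_zero.mp h2 with h3 | h3
      · exact Or.inl h3
      · exact Or.inr (by linear_combination h3)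
    · intro j _ hj
      rw [he (Ne.symm hj), zero_mul]
    · intro hmem
      exact absurd (Finset.mem_univ i) hmem
  have hsub1e : ∀ i, (1 - e) i i = 1 - e i i := by
    intro i
    rw [Matrix.sub_apply, Matrix.one_apply_eq]
  by_cases hs0 : Real.sin θ = 0
  · -- degenerate: the set is {e}
    have hc1 : Real.cos θ ^ 2 = 1 := by
      rw [hs0] at hpyth
      linarith [hpyth]
    have hset : {p : Matrix (Fin (2 * n)) (Fin (2 * n)) ℂ |
        p * p = p ∧ p.conjTranspose = p ∧
        ∀ i, p i i = ((Real.cos θ ^ 2 : ℝ) : ℂ) * e i i +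
          ((Real.sin θ ^ 2 : ℝ) : ℂ) * (1 - e) i i} = {e} := by
      ext p
      simp only [Set.mem_setOf_eq, Set.mem_singleton_iff]
      constructor
      · rintro ⟨hp1, hp2, hp3⟩
        have hdiag : ∀ i, p i i = e i i := by
          intro i
          rw [hp3 i, hs0, hc1]
          push_cast
          ring
        have h01 : ∀ i, p i i = 0 ∨ p i i = 1 := fun i => (hdiag i) ▸ he01 i
        rw [proj01 p hp1 hp2 h01, show (fun i => p i i) = fun i => e i i from funext hdiag]
        exact he.diagonal_diag
      · rintro rfl
        refine ⟨hee, hes, fun i => ?_⟩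
        rw [hs0, hc1]
        push_cast
        ring
    rw [hset]
    exact isPathConnected_singleton e
  by_cases hc0 : Real.cos θ = 0
  · -- degenerate: the set is {1 - e}
    have hs1 : Real.sin θ ^ 2 = 1 := by
      rw [hc0] at hpyth
      linarith [hpyth]
    have h1e : (1 - e) * (1 - e) = 1 - e := by
      have hexp : (1 - e) * (1 - e) = 1 - e - e + e * e := by noncomm_ring
      rw [hexp, hee]
      abel
    have h1es : (1 - e)ᴴ = 1 - e := by
      rw [conjTranspose_sub, conjTranspose_one, hes]
    have h1ed : (1 - e).IsDiag := Matrix.isDiag_one.sub he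
    have hset : {p : Matrix (Fin (2 * n)) (Fin (2 * n)) ℂ |
        p * p = p ∧ p.conjTranspose = p ∧
        ∀ i, p i i = ((Real.cos θ ^ 2 : ℝ) : ℂ) * e i i +
          ((Real.sin θ ^ 2 : ℝ) : ℂ) * (1 - e) i i} = {1 - e} := by
      ext p
      simp only [Set.mem_setOf_eq, Set.mem_singleton_iff]
      constructor
      · rintro ⟨hp1, hp2, hp3⟩
        have hdiag : ∀ i, p i i = (1 - e) i i := by
          intro i
          rw [hp3 i, hc0, hs1]
          push_cast
          ring
        have h01 : ∀ i, p i i = 0 ∨ p i i = 1 := by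
          intro i
          rw [hdiag i, hsub1e i]
          rcases he01 i with h | h <;> rw [h]
          · right; ring
          · left; ring
        rw [proj01 p hp1 hp2 h01,
          show (fun i => p i i) = fun i => (1 - e) i i from funext hdiag]
        exact h1ed.diagonal_diag
      · rintro rfl
        refine ⟨h1e, h1es, fun i => ?_⟩
        rw [hc0, hs1]
        push_cast
        ring
    rw [hset]
    exact isPathConnected_singleton (1 - e)
  -- main case
  have hθpi : θ ≤ Real.pi := by
    have := Real.pi_pos
    linarith
  have hsnn : 0 ≤ Real.sin θ := Real.sin_nonneg_of_nonneg_of_le_pi hθ0 hθpi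
  have hcnn : 0 ≤ Real.cos θ := by
    apply Real.cos_nonneg_of_mem_Icc
    constructor
    · have := Real.pi_pos
      linarith
    · exact hθ1
  have hspos : 0 < Real.sin θ := lt_of_le_of_ne hsnn (Ne.symm hs0)
  have hcpos : 0 < Real.cos θ := lt_of_le_of_ne hcnn (Ne.symm hc0)
  set γ : ℝ := Real.cos θ ^ 2 - Real.sin θ ^ 2 with hγdef
  set σ : ℝ := 2 * Real.cos θ * Real.sin θ with hσdef
  have hσpos : 0 < σ := by
    rw [hσdef]
    positivity
  have hγσ : γ ^ 2 + σ ^ 2 = 1 := by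
    rw [hγdef, hσdef]
    nlinarith [hpyth]
  -- index bookkeeping
  set P : Fin (2 * n) → Prop := fun i => e i i = 1 with hPdef
  have hed : e = Matrix.diagonal (fun i => e i i) := (he.diagonal_diag).symm
  have hcardP : Fintype.card {i // P i} = n := by
    rw [hed, Matrix.rank_diagonal] at hr
    refine Eq.trans ?_ hr
    apply Fintype.card_congr
    apply Equiv.subtypeEquivRight
    intro i
    rw [hPdef]
    constructor
    · intro h
      rw [h]
      exact one_ne_zero
    · intro h
      rcases he01 i with h2 | h2
      · exact absurd h2 h
      · exact h2
  have hcardQ : Fintype.card {i // ¬ P i} = n := by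
    rw [Fintype.card_subtype_compl, hcardP, Fintype.card_fin]
    omega
  set σe : Fin (2 * n) ≃ (Fin n ⊕ Fin n) :=
    (Equiv.sumCompl P).symm.trans
      (Equiv.sumCongr (Fintype.equivFinOfCardEq hcardP) (Fintype.equivFinOfCardEq hcardQ))
    with hσedef
  have hσe1 : ∀ i : Fin (2 * n), ∀ k : Fin n, σe i = Sum.inl k → e i i = 1 := by
    intro i k h
    have h2 : σe.symm (Sum.inl k) = i := by rw [← h, Equiv.symm_apply_apply]
    have h3 : σe.symm (Sum.inl k)
        = (Equiv.sumCompl P) (Sum.inl ((Fintype.equivFinOfCardEq hcardP).symm k)) := rfl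
    rw [h3, Equiv.sumCompl_apply_inl] at h2
    rw [← h2]
    exact ((Fintype.equivFinOfCardEq hcardP).symm k).2
  have hσe2 : ∀ i : Fin (2 * n), ∀ k : Fin n, σe i = Sum.inr k → e i i = 0 := by
    intro i k h
    have h2 : σe.symm (Sum.inr k) = i := by rw [← h, Equiv.symm_apply_apply]
    have h3 : σe.symm (Sum.inr k)
        = (Equiv.sumCompl P) (Sum.inr ((Fintype.equivFinOfCardEq hcardQ).symm k)) := rfl
    rw [h3, Equiv.sumCompl_apply_inr] at h2
    have h4 : ¬ P i := by
      rw [← h2]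
      exact ((Fintype.equivFinOfCardEq hcardQ).symm k).2
    rcases he01 i with h5 | h5
    · exact h5
    · exact absurd h5 h4
  set Φ : Matrix (Fin n ⊕ Fin n) (Fin n ⊕ Fin n) ℂ → Matrix (Fin (2 * n)) (Fin (2 * n)) ℂ :=
    fun Q => Q.submatrix σe σe with hΦdef
  have hc2 : (1 + γ) / 2 = Real.cos θ ^ 2 := by rw [hγdef]; linarith [hpyth]
  have hs2 : (1 - γ) / 2 = Real.sin θ ^ 2 := by rw [hγdef]; linarith [hpyth]
  have hset : {p : Matrix (Fin (2 * n)) (Fin (2 * n)) ℂ |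
      p * p = p ∧ p.conjTranspose = p ∧
      ∀ i, p i i = ((Real.cos θ ^ 2 : ℝ) : ℂ) * e i i +
        ((Real.sin θ ^ 2 : ℝ) : ℂ) * (1 - e) i i} = Φ '' (Sset n γ) := by
    ext p
    simp only [Set.mem_setOf_eq, Set.mem_image]
    constructor
    · rintro ⟨hp1, hp2, hp3⟩
      refine ⟨p.submatrix σe.symm σe.symm, ⟨?_, ?_, ?_, ?_⟩, ?_⟩
      · rw [Matrix.submatrix_mul_equiv, hp1]
      · rw [Matrix.conjTranspose_submatrix, hp2]
      · intro i
        set j : Fin (2 * n) := σe.symm (Sum.inl i) with hjdef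
        have hj : σe j = Sum.inl i := by rw [hjdef, Equiv.apply_symm_apply]
        have hej : e j j = 1 := hσe1 j i hj
        show p j j = _
        rw [hp3 j, hej, hsub1e j, hej]
        rw [← hc2]
        push_cast
        ring
      · intro i
        set j : Fin (2 * n) := σe.symm (Sum.inr i) with hjdef
        have hj : σe j = Sum.inr i := by rw [hjdef, Equiv.apply_symm_apply]
        have hej : e j j = 0 := hσe2 j i hj
        show p j j = _
        rw [hp3 j, hej, hsub1e j, hej]
        rw [← hs2]
        push_cast
        ring
      · rw [hΦdef]
        show (p.submatrix σe.symm σe.symm).submatrix σe σe = p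
        rw [Matrix.submatrix_submatrix]
        have hid : (σe.symm ∘ σe : Fin (2 * n) → Fin (2 * n)) = id := by
          funext i
          simp
        rw [hid, Matrix.submatrix_id_id]
    · rintro ⟨Q, ⟨hQ1, hQ2, hQ3, hQ4⟩, rfl⟩
      rw [hΦdef]
      refine ⟨?_, ?_, ?_⟩
      · show Q.submatrix σe σe * Q.submatrix σe σe = Q.submatrix σe σe
        rw [Matrix.submatrix_mul_equiv, hQ1]
      · show (Q.submatrix σe σe)ᴴ = Q.submatrix σe σe
        rw [Matrix.conjTranspose_submatrix, hQ2]
      · intro i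
        show Q (σe i) (σe i) = _
        rcases hz : σe i with k | k
        · have hei : e i i = 1 := hσe1 i k hz
          rw [hQ3 k, hei, hsub1e i, hei, ← hc2]
          push_cast
          ring
        · have hei : e i i = 0 := hσe2 i k hz
          rw [hQ4 k, hei, hsub1e i, hei, ← hs2]
          push_cast
          ring
  rw [hset]
  apply IsPathConnected.image (main_pathConnected n γ σ hσpos hγσ)
  rw [hΦdef]
  apply continuous_matrix
  intro i j
  exact (continuous_apply (σe j)).comp (continuous_apply (σe i))
end
end
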